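/- arXiv:0906.3723 — 3 statements merged into one kernel-verified Lean document; each statement's English description precedes it below -/
import Mathlib

section
/- In a grid pin sequence, if p_{i+1} is a left pin then the horizontal coordinate of p_{i+1} is smaller than that of every earlier left pin lying in the same column of the grid, and larger than that of every earlier right pin lying in the same column of the grid. The analogous statements hold when p_{i+1} is a right pin (with the inequalities reversed), and when p_{i+1} is an up or down pin (with rows of the grid and vertical coordinates in place of columns and horizontal coordinates). -/
/-! Grid pin sequences in a gridded plane.  The gridded plane is described by
the set `V` of vertical grid line coordinates and the set `H` of horizontal
grid line coordinates. -/

/-- `q` separates `a` from `b` by position. -/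
def SepX (q a b : ℝ × ℝ) : Prop := min a.1 b.1 < q.1 ∧ q.1 < max a.1 b.1

/-- `q` separates `a` from `b` by value. -/
def SepY (q a b : ℝ × ℝ) : Prop := min a.2 b.2 < q.2 ∧ q.2 < max a.2 b.2

/-- `q` lies in `rect(a,b)`. -/
def InRect (q a b : ℝ × ℝ) : Prop :=
  min a.1 b.1 ≤ q.1 ∧ q.1 ≤ max a.1 b.1 ∧ min a.2 b.2 ≤ q.2 ∧ q.2 ≤ max a.2 b.2

/-- No grid line of `S` lies strictly between `x` and `y`. -/
def NoLineBetween (S : Set ℝ) (x y : ℝ) : Prop := ∀ v ∈ S, ¬ (min x y < v ∧ v < max x y)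

/-- Two horizontal coordinates lie in the same column of the grid. -/
def SameCol (V : Set ℝ) (x y : ℝ) : Prop := ∀ v ∈ V, (v < x ↔ v < y)

/-- Two vertical coordinates lie in the same row of the grid. -/
def SameRow (H : Set ℝ) (x y : ℝ) : Prop := ∀ h ∈ H, (h < x ↔ h < y)

/-- `q` is a left pin with respect to `rect(a,b)`. -/
def IsLeftP (a b q : ℝ × ℝ) : Prop := q.1 < min a.1 b.1 ∧ SepY q a b

/-- `q` is a right pin with respect to `rect(a,b)`. -/
def IsRightP (a b q : ℝ × ℝ) : Prop := max a.1 b.1 < q.1 ∧ SepY q a b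

/-- `q` is an up pin with respect to `rect(a,b)`. -/
def IsUpP (a b q : ℝ × ℝ) : Prop := max a.2 b.2 < q.2 ∧ SepX q a b

/-- `q` is a down pin with respect to `rect(a,b)`. -/
def IsDownP (a b q : ℝ × ℝ) : Prop := q.2 < min a.2 b.2 ∧ SepX q a b

/-- Row-column agreement of `q` as a pin for the pair `(a, b)`: an up or down
pin lies in the same column of the grid as `b`, a left or right pin in the same
row as `b`. -/
def RCAgree (V H : Set ℝ) (a b q : ℝ × ℝ) : Prop :=
  ((IsUpP a b q ∨ IsDownP a b q) → SameCol V q.1 b.1) ∧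
  ((IsLeftP a b q ∨ IsRightP a b q) → SameRow H q.2 b.2)

/-- The conditions making `p 1, …, p N` a grid pin sequence with fictive pin
`p 0`: genericity of the points, adjacency of `p 1` to the origin, and for
each later pin local separation, local externality, row-column agreement and
non-interaction (it could not have been used as a grid pin earlier). -/
def PinConds (V H : Set ℝ) (p : ℕ → ℝ × ℝ) (N : ℕ) : Prop :=
  (∀ i, 1 ≤ i → i ≤ N → (p i).1 ∉ V ∧ (p i).2 ∉ H) ∧
  (∀ i j, 1 ≤ i → i ≤ N → 1 ≤ j → j ≤ N → i ≠ j →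
    (p i).1 ≠ (p j).1 ∧ (p i).2 ≠ (p j).2) ∧
  (∀ i, 1 ≤ i → i ≤ N → (p i).1 ≠ (p 0).1 ∧ (p i).2 ≠ (p 0).2) ∧
  (1 ≤ N → NoLineBetween V (p 0).1 (p 1).1 ∧ NoLineBetween H (p 0).2 (p 1).2) ∧
  (∀ i, 1 ≤ i → i + 1 ≤ N →
    (SepX (p (i+1)) (p (i-1)) (p i) ∨ SepY (p (i+1)) (p (i-1)) (p i)) ∧
    (∀ j, 1 ≤ j → j ≤ i → ¬ InRect (p (i+1)) (p (j-1)) (p j)) ∧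
    RCAgree V H (p (i-1)) (p i) (p (i+1)) ∧
    (∀ j, 1 ≤ j → j < i →
      ¬ ((SepX (p (i+1)) (p (j-1)) (p j) ∨ SepY (p (i+1)) (p (j-1)) (p j)) ∧
         RCAgree V H (p (j-1)) (p j) (p (i+1)) ∧
         (∀ j', 1 ≤ j' → j' ≤ j → ¬ InRect (p (i+1)) (p (j'-1)) (p j')))))

/-- `p 1, …, p N` is a grid pin sequence: the fictive pin `p 0` lies at the
intersection of two perpendicular grid lines and the pin conditions hold. -/
def IsGridPinSeq (V H : Set ℝ) (p : ℕ → ℝ × ℝ) (N : ℕ) : Prop :=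
  (p 0).1 ∈ V ∧ (p 0).2 ∈ H ∧ PinConds V H p N

/-- The `j`-th pin of the sequence is a left pin (`p 1` has the two directions
given by its position relative to `p 0`). -/
def PinLeft (p : ℕ → ℝ × ℝ) (j : ℕ) : Prop :=
  (j = 1 ∧ (p 1).1 < (p 0).1) ∨ (2 ≤ j ∧ IsLeftP (p (j-2)) (p (j-1)) (p j))

/-- The `j`-th pin of the sequence is a right pin. -/
def PinRight (p : ℕ → ℝ × ℝ) (j : ℕ) : Prop :=
  (j = 1 ∧ (p 0).1 < (p 1).1) ∨ (2 ≤ j ∧ IsRightP (p (j-2)) (p (j-1)) (p j))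

/-- The `j`-th pin of the sequence is an up pin. -/
def PinUp (p : ℕ → ℝ × ℝ) (j : ℕ) : Prop :=
  (j = 1 ∧ (p 0).2 < (p 1).2) ∨ (2 ≤ j ∧ IsUpP (p (j-2)) (p (j-1)) (p j))

/-- The `j`-th pin of the sequence is a down pin. -/
def PinDown (p : ℕ → ℝ × ℝ) (j : ℕ) : Prop :=
  (j = 1 ∧ (p 1).2 < (p 0).2) ∨ (2 ≤ j ∧ IsDownP (p (j-2)) (p (j-1)) (p j))

/-! ### Auxiliary machinery for the proof -/

section PinAux

/-- Flip a strict-order iff across a point distinct from both sides. -/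
private lemma flip_iff {v x y : ℝ} (hx : v ≠ x) (hy : v ≠ y) (h : x < v ↔ y < v) :
    v < x ↔ v < y := by
  constructor
  · intro h1
    have h3 : ¬ y < v := fun hh => lt_asymm h1 (h.mpr hh)
    exact lt_of_le_of_ne (not_lt.mp h3) hy
  · intro h1
    have h3 : ¬ x < v := fun hh => lt_asymm h1 (h.mp hh)
    exact lt_of_le_of_ne (not_lt.mp h3) hx

private lemma flip_iff' {v x y : ℝ} (hx : x ≠ v) (hy : y ≠ v) (h : v < x ↔ v < y) :
    x < v ↔ y < v := by
  constructor
  · intro h1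
    have h3 : ¬ v < y := fun hh => lt_asymm h1 (h.mpr hh)
    exact lt_of_le_of_ne (not_lt.mp h3) hy
  · intro h1
    have h3 : ¬ v < x := fun hh => lt_asymm h1 (h.mp hh)
    exact lt_of_le_of_ne (not_lt.mp h3) hx

private lemma sameCol_symm {S : Set ℝ} {x y : ℝ} (h : SameCol S x y) : SameCol S y x :=
  fun v hv => (h v hv).symm

private lemma sameCol_trans {S : Set ℝ} {x y z : ℝ} (h1 : SameCol S x y) (h2 : SameCol S y z) :
    SameCol S x z := fun v hv => (h1 v hv).trans (h2 v hv)

private lemma sameCol_sandwich {S : Set ℝ} {x y z : ℝ} (h : SameCol S x z)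
    (h1 : x < y) (h2 : y < z) : SameCol S y z :=
  fun v hv => ⟨fun hlt => lt_trans hlt h2, fun hlt => lt_trans ((h v hv).mpr hlt) h1⟩

/-- Nesting of strict separation intervals. -/
private lemma sep_nest {a b c d : ℝ} (h1 : min b c < d ∧ d < max b c)
    (h2 : min a b < c ∧ c < max a b) : min a b < d ∧ d < max a b := by
  rcases le_total a b with h | h
  · have hc1 : a < c := by rw [min_eq_left h] at h2; exact h2.1
    have hc2 : c < b := by rw [max_eq_right h] at h2; exact h2.2
    rw [min_eq_right hc2.le, max_eq_left hc2.le] at h1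
    rw [min_eq_left h, max_eq_right h]
    exact ⟨by linarith [h1.1], h1.2⟩
  · have hc1 : b < c := by rw [min_eq_right h] at h2; exact h2.1
    have hc2 : c < a := by rw [max_eq_left h] at h2; exact h2.2
    rw [min_eq_left hc1.le, max_eq_right hc1.le] at h1
    rw [min_eq_right h, max_eq_left h]
    exact ⟨h1.1, by linarith [h1.2]⟩

private lemma escape_x {q a b : ℝ × ℝ} (h : ¬ InRect q a b)
    (hy : min a.2 b.2 < q.2 ∧ q.2 < max a.2 b.2) :
    q.1 < min a.1 b.1 ∨ max a.1 b.1 < q.1 := by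
  by_contra hc
  push_neg at hc
  exact h ⟨hc.1, hc.2, hy.1.le, hy.2.le⟩

private lemma escape_y {q a b : ℝ × ℝ} (h : ¬ InRect q a b)
    (hx : min a.1 b.1 < q.1 ∧ q.1 < max a.1 b.1) :
    q.2 < min a.2 b.2 ∨ max a.2 b.2 < q.2 := by
  by_contra hc
  push_neg at hc
  exact h ⟨hx.1.le, hx.2.le, hc.1, hc.2⟩

/-! #### The x-negation transformation -/

private def negP (a : ℝ × ℝ) : ℝ × ℝ := (-a.1, a.2)

private def negS (S : Set ℝ) : Set ℝ := {v | -v ∈ S}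

private lemma neg_fst (a : ℝ × ℝ) : (negP a).1 = -a.1 := rfl
private lemma neg_snd (a : ℝ × ℝ) : (negP a).2 = a.2 := rfl

private lemma sepX_neg {q a b : ℝ × ℝ} : SepX (negP q) (negP a) (negP b) ↔ SepX q a b := by
  simp only [SepX, neg_fst, min_neg_neg, max_neg_neg]
  constructor <;> rintro ⟨h1, h2⟩ <;> exact ⟨by linarith, by linarith⟩

private lemma sepY_neg {q a b : ℝ × ℝ} : SepY (negP q) (negP a) (negP b) ↔ SepY q a b :=
  Iff.rfl

private lemma isLeftP_neg {a b q : ℝ × ℝ} : IsLeftP (negP a) (negP b) (negP q) ↔ IsRightP a b q := by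
  simp only [IsLeftP, IsRightP, SepY, neg_fst, neg_snd, min_neg_neg]
  constructor <;> rintro ⟨h1, h2⟩ <;> exact ⟨by linarith, h2⟩

private lemma isRightP_neg {a b q : ℝ × ℝ} : IsRightP (negP a) (negP b) (negP q) ↔ IsLeftP a b q := by
  simp only [IsLeftP, IsRightP, SepY, neg_fst, neg_snd, max_neg_neg]
  constructor <;> rintro ⟨h1, h2⟩ <;> exact ⟨by linarith, h2⟩

private lemma isUpP_neg {a b q : ℝ × ℝ} : IsUpP (negP a) (negP b) (negP q) ↔ IsUpP a b q :=
  and_congr Iff.rfl sepX_neg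

private lemma isDownP_neg {a b q : ℝ × ℝ} : IsDownP (negP a) (negP b) (negP q) ↔ IsDownP a b q :=
  and_congr Iff.rfl sepX_neg

private lemma inRect_neg {q a b : ℝ × ℝ} : InRect (negP q) (negP a) (negP b) ↔ InRect q a b := by
  simp only [InRect, neg_fst, neg_snd, min_neg_neg, max_neg_neg]
  constructor <;> rintro ⟨h1, h2, h3, h4⟩ <;> exact ⟨by linarith, by linarith, h3, h4⟩

private lemma noLineBetween_neg {V : Set ℝ} {x y : ℝ} :
    NoLineBetween (negS V) (-x) (-y) ↔ NoLineBetween V x y := by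
  simp only [NoLineBetween, min_neg_neg, max_neg_neg]
  constructor
  · intro h v hv hc
    exact h (-v) (show -(-v) ∈ V by rwa [neg_neg]) ⟨by linarith [hc.2], by linarith [hc.1]⟩
  · intro h v hv hc
    exact h (-v) hv ⟨by linarith [hc.2], by linarith [hc.1]⟩

private lemma sameCol_neg {V : Set ℝ} {x y : ℝ} (hx : x ∉ V) (hy : y ∉ V) :
    SameCol (negS V) (-x) (-y) ↔ SameCol V x y := by
  constructor
  · intro h v hv
    have h2 := h (-v) (show -(-v) ∈ V by rwa [neg_neg])
    rw [neg_lt_neg_iff, neg_lt_neg_iff] at h2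
    exact flip_iff (fun e => hx (by rw [← e]; exact hv)) (fun e => hy (by rw [← e]; exact hv)) h2
  · intro h v hv
    have hv' : -v ∈ V := hv
    have h2 := h (-v) hv'
    exact lt_neg.trans ((flip_iff' (fun e => hx (by rw [e]; exact hv'))
      (fun e => hy (by rw [e]; exact hv')) h2).trans lt_neg.symm)

private lemma rcAgree_neg {V H : Set ℝ} {a b q : ℝ × ℝ} (hq : q.1 ∉ V) (hb : b.1 ∉ V) :
    RCAgree (negS V) H (negP a) (negP b) (negP q) ↔ RCAgree V H a b q := by
  unfold RCAgree
  constructor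
  · rintro ⟨c1, c2⟩
    constructor
    · intro hud
      have h := c1 (hud.elim (fun h => Or.inl (isUpP_neg.mpr h))
        (fun h => Or.inr (isDownP_neg.mpr h)))
      exact (sameCol_neg hq hb).mp h
    · intro hlr
      exact c2 (hlr.elim (fun h => Or.inr (isRightP_neg.mpr h))
        (fun h => Or.inl (isLeftP_neg.mpr h)))
  · rintro ⟨c1, c2⟩
    constructor
    · intro hud
      refine (sameCol_neg hq hb).mpr (c1 ?_)
      rcases hud with h | h
      · exact Or.inl (isUpP_neg.mp h)
      · exact Or.inr (isDownP_neg.mp h)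
    · intro hlr
      exact c2 (hlr.elim (fun h => Or.inr (isLeftP_neg.mp h))
        (fun h => Or.inl (isRightP_neg.mp h)))

private lemma gps_neg {V H : Set ℝ} {p : ℕ → ℝ × ℝ} {N : ℕ} (hp : IsGridPinSeq V H p N) :
    IsGridPinSeq (negS V) H (negP ∘ p) N := by
  obtain ⟨h0x, h0y, hgen, hdist, hdist0, hadj, hmain⟩ := hp
  refine ⟨show -(-(p 0).1) ∈ V by rwa [neg_neg], h0y, ?_, ?_, ?_, ?_, ?_⟩
  · intro i h1 h2
    refine ⟨fun hh => (hgen i h1 h2).1 ?_, (hgen i h1 h2).2⟩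
    have : -(-(p i).1) ∈ V := hh
    rwa [neg_neg] at this
  · intro i j a b c d e
    exact ⟨fun hh => (hdist i j a b c d e).1 (neg_inj.mp hh), (hdist i j a b c d e).2⟩
  · intro i a b
    exact ⟨fun hh => (hdist0 i a b).1 (neg_inj.mp hh), (hdist0 i a b).2⟩
  · intro h1
    exact ⟨noLineBetween_neg.mpr (hadj h1).1, (hadj h1).2⟩
  · intro i h1 h2
    obtain ⟨hsep, hext, hrc, hnon⟩ := hmain i h1 h2
    refine ⟨?_, ?_, ?_, ?_⟩
    · rcases hsep with h | h
      · exact Or.inl (sepX_neg.mpr h)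
      · exact Or.inr h
    · intro j a b hc
      exact hext j a b (inRect_neg.mp hc)
    · exact (rcAgree_neg (hgen (i+1) (by omega) h2).1 (hgen i h1 (by omega)).1).mpr hrc
    · intro j a b hc
      obtain ⟨s, r, e⟩ := hc
      apply hnon j a b
      refine ⟨?_, ?_, ?_⟩
      · rcases s with h | h
        · exact Or.inl (sepX_neg.mp h)
        · exact Or.inr h
      · exact (rcAgree_neg (hgen (i+1) (by omega) h2).1 (hgen j a (by omega)).1).mp r
      · intro j' u v hc2
        exact e j' u v (inRect_neg.mpr hc2)

private lemma pinLeft_neg {p : ℕ → ℝ × ℝ} {j : ℕ} : PinLeft (negP ∘ p) j ↔ PinRight p j := by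
  unfold PinLeft PinRight
  constructor
  · rintro (⟨e, h⟩ | ⟨e, h⟩)
    · refine Or.inl ⟨e, ?_⟩
      have h' : -(p 1).1 < -(p 0).1 := h
      linarith
    · exact Or.inr ⟨e, isLeftP_neg.mp h⟩
  · rintro (⟨e, h⟩ | ⟨e, h⟩)
    · refine Or.inl ⟨e, show -(p 1).1 < -(p 0).1 by linarith⟩
    · exact Or.inr ⟨e, isLeftP_neg.mpr h⟩

private lemma pinRight_neg {p : ℕ → ℝ × ℝ} {j : ℕ} : PinRight (negP ∘ p) j ↔ PinLeft p j := by
  unfold PinLeft PinRight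
  constructor
  · rintro (⟨e, h⟩ | ⟨e, h⟩)
    · refine Or.inl ⟨e, ?_⟩
      have h' : -(p 0).1 < -(p 1).1 := h
      linarith
    · exact Or.inr ⟨e, isRightP_neg.mp h⟩
  · rintro (⟨e, h⟩ | ⟨e, h⟩)
    · refine Or.inl ⟨e, show -(p 0).1 < -(p 1).1 by linarith⟩
    · exact Or.inr ⟨e, isRightP_neg.mpr h⟩

private lemma pinUp_neg {p : ℕ → ℝ × ℝ} {j : ℕ} : PinUp (negP ∘ p) j ↔ PinUp p j := by
  unfold PinUp
  constructor
  · rintro (⟨e, h⟩ | ⟨e, h⟩)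
    · exact Or.inl ⟨e, h⟩
    · exact Or.inr ⟨e, isUpP_neg.mp h⟩
  · rintro (⟨e, h⟩ | ⟨e, h⟩)
    · exact Or.inl ⟨e, h⟩
    · exact Or.inr ⟨e, isUpP_neg.mpr h⟩

private lemma pinDown_neg {p : ℕ → ℝ × ℝ} {j : ℕ} : PinDown (negP ∘ p) j ↔ PinDown p j := by
  unfold PinDown
  constructor
  · rintro (⟨e, h⟩ | ⟨e, h⟩)
    · exact Or.inl ⟨e, h⟩
    · exact Or.inr ⟨e, isDownP_neg.mp h⟩
  · rintro (⟨e, h⟩ | ⟨e, h⟩)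
    · exact Or.inl ⟨e, h⟩
    · exact Or.inr ⟨e, isDownP_neg.mpr h⟩

end PinAux

section PinAux2

/-! #### The coordinate-swap transformation -/

private def swapP (a : ℝ × ℝ) : ℝ × ℝ := (a.2, a.1)

private lemma inRect_swap {q a b : ℝ × ℝ} :
    InRect (swapP q) (swapP a) (swapP b) ↔ InRect q a b := by
  unfold InRect swapP
  dsimp only
  tauto

private lemma rcAgree_swap {V H : Set ℝ} {a b q : ℝ × ℝ} :
    RCAgree H V (swapP a) (swapP b) (swapP q) ↔ RCAgree V H a b q := by
  unfold RCAgree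
  constructor
  · rintro ⟨c1, c2⟩
    exact ⟨fun h => c2 (h.elim (fun hh => Or.inr hh) (fun hh => Or.inl hh)),
           fun h => c1 (h.elim (fun hh => Or.inr hh) (fun hh => Or.inl hh))⟩
  · rintro ⟨c1, c2⟩
    exact ⟨fun h => c2 (h.elim (fun hh => Or.inr hh) (fun hh => Or.inl hh)),
           fun h => c1 (h.elim (fun hh => Or.inr hh) (fun hh => Or.inl hh))⟩

private lemma gps_swap {V H : Set ℝ} {p : ℕ → ℝ × ℝ} {N : ℕ} (hp : IsGridPinSeq V H p N) :
    IsGridPinSeq H V (swapP ∘ p) N := by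
  obtain ⟨h0x, h0y, hgen, hdist, hdist0, hadj, hmain⟩ := hp
  refine ⟨h0y, h0x, fun i a b => ⟨(hgen i a b).2, (hgen i a b).1⟩,
    fun i j a b c d e => ⟨(hdist i j a b c d e).2, (hdist i j a b c d e).1⟩,
    fun i a b => ⟨(hdist0 i a b).2, (hdist0 i a b).1⟩,
    fun h1 => ⟨(hadj h1).2, (hadj h1).1⟩, ?_⟩
  intro i h1 h2
  obtain ⟨hsep, hext, hrc, hnon⟩ := hmain i h1 h2
  refine ⟨hsep.elim (fun h => Or.inr h) (fun h => Or.inl h), ?_, rcAgree_swap.mpr hrc, ?_⟩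
  · intro j a b hc
    exact hext j a b (inRect_swap.mp hc)
  · intro j a b hc
    obtain ⟨s, r, e⟩ := hc
    exact hnon j a b ⟨s.elim (fun h => Or.inr h) (fun h => Or.inl h), rcAgree_swap.mp r,
      fun j' u v hc2 => e j' u v (inRect_swap.mpr hc2)⟩

/-! #### Classification, alternation, and the key non-interaction consequence -/

/-- Every pin `p m`, `2 ≤ m ≤ N`, is horizontal or vertical. -/
private lemma classify {V H : Set ℝ} {p : ℕ → ℝ × ℝ} {N : ℕ} (hp : IsGridPinSeq V H p N)
    (m : ℕ) (h2 : 2 ≤ m) (hN : m ≤ N) :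
    (IsLeftP (p (m-2)) (p (m-1)) (p m) ∨ IsRightP (p (m-2)) (p (m-1)) (p m)) ∨
    (IsUpP (p (m-2)) (p (m-1)) (p m) ∨ IsDownP (p (m-2)) (p (m-1)) (p m)) := by
  obtain ⟨_, _, hgen, hdist, hdist0, hadj, hmain⟩ := hp
  have h := hmain (m-1) (by omega) (by omega)
  rw [show m - 1 + 1 = m by omega, show m - 1 - 1 = m - 2 by omega] at h
  obtain ⟨hsep, hext, -, -⟩ := h
  have hx := hext (m-1) (by omega) (by omega)
  rw [show m - 1 - 1 = m - 2 by omega] at hx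
  rcases hsep with h | h
  · right
    rcases escape_y hx h with h' | h'
    · exact Or.inr ⟨h', h⟩
    · exact Or.inl ⟨h', h⟩
  · left
    rcases escape_x hx h with h' | h'
    · exact Or.inl ⟨h', h⟩
    · exact Or.inr ⟨h', h⟩

/-- A horizontal pin is never followed by a horizontal pin. -/
private lemma altH {V H : Set ℝ} {p : ℕ → ℝ × ℝ} {N : ℕ} (hp : IsGridPinSeq V H p N)
    (m : ℕ) (h2 : 2 ≤ m) (hN : m + 1 ≤ N)
    (hm : IsLeftP (p (m-2)) (p (m-1)) (p m) ∨ IsRightP (p (m-2)) (p (m-1)) (p m)) :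
    ¬ (IsLeftP (p (m-1)) (p m) (p (m+1)) ∨ IsRightP (p (m-1)) (p m) (p (m+1))) := by
  obtain ⟨-, -, hgen, hdist, hdist0, hadj, hmain⟩ := hp
  intro hm1
  have hy0 : SepY (p m) (p (m-2)) (p (m-1)) := hm.elim (fun h => h.2) (fun h => h.2)
  have hy1 : SepY (p (m+1)) (p (m-1)) (p m) := hm1.elim (fun h => h.2) (fun h => h.2)
  have hy2 : SepY (p (m+1)) (p (m-2)) (p (m-1)) := sep_nest hy1 hy0
  have hmainm := hmain m (by omega) hN
  have hext := hmainm.2.1 (m-1) (by omega) (by omega)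
  rw [show m - 1 - 1 = m - 2 by omega] at hext
  have hxe := escape_x hext hy2
  have hrc1 : SameRow H (p (m+1)).2 (p m).2 := (hmainm.2.2.1).2 hm1
  have hm0 := hmain (m-1) (by omega) (by omega)
  rw [show m - 1 + 1 = m by omega, show m - 1 - 1 = m - 2 by omega] at hm0
  have hrc0 : SameRow H (p m).2 (p (m-1)).2 := (hm0.2.2.1).2 hm
  have hrow : SameRow H (p (m+1)).2 (p (m-1)).2 := sameCol_trans hrc1 hrc0
  have hnon := hmainm.2.2.2 (m-1) (by omega) (by omega)
  rw [show m - 1 - 1 = m - 2 by omega] at hnon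
  apply hnon
  refine ⟨Or.inr hy2, ⟨?_, fun _ => hrow⟩, fun j' a b => hmainm.2.1 j' a (by omega)⟩
  rintro (⟨-, hsx⟩ | ⟨-, hsx⟩) <;> exfalso <;> obtain ⟨u, v⟩ := hsx <;>
    rcases hxe with h | h <;> linarith

/-- A vertical pin is never followed by a vertical pin. -/
private lemma altV {V H : Set ℝ} {p : ℕ → ℝ × ℝ} {N : ℕ} (hp : IsGridPinSeq V H p N)
    (m : ℕ) (h2 : 2 ≤ m) (hN : m + 1 ≤ N)
    (hm : IsUpP (p (m-2)) (p (m-1)) (p m) ∨ IsDownP (p (m-2)) (p (m-1)) (p m)) :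
    ¬ (IsUpP (p (m-1)) (p m) (p (m+1)) ∨ IsDownP (p (m-1)) (p m) (p (m+1))) := by
  have hp2 := gps_swap hp
  have h := altH hp2 m h2 hN (hm.elim (fun h => Or.inr h) (fun h => Or.inl h))
  intro hc
  exact h (hc.elim (fun h' => Or.inr h') (fun h' => Or.inl h'))

/-- Key consequence of non-interaction: if `p (i+1)` is a horizontal pin then it never
lies strictly inside the x-span of a pair `(p (k-1), p k)` with `p k` in its column. -/
private lemma lem1 {V H : Set ℝ} {p : ℕ → ℝ × ℝ} {N : ℕ} (hp : IsGridPinSeq V H p N)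
    (i : ℕ) (hi : 1 ≤ i) (hiN : i + 1 ≤ N)
    (hq : IsLeftP (p (i-1)) (p i) (p (i+1)) ∨ IsRightP (p (i-1)) (p i) (p (i+1)))
    (k : ℕ) (hk1 : 1 ≤ k) (hki : k ≤ i) (hcol : SameCol V (p k).1 (p (i+1)).1) :
    ¬ (min (p (k-1)).1 (p k).1 < (p (i+1)).1 ∧ (p (i+1)).1 < max (p (k-1)).1 (p k).1) := by
  obtain ⟨-, -, hgen, hdist, hdist0, hadj, hmain⟩ := id hp
  intro hins
  rcases eq_or_lt_of_le hki with rfl | hklt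
  · rcases hq with ⟨h, -⟩ | ⟨h, -⟩
    · have := hins.1
      have h2 : (p (k+1)).1 < min (p (k-1)).1 (p k).1 := h
      linarith
    · have := hins.2
      have h2 : max (p (k-1)).1 (p k).1 < (p (k+1)).1 := h
      linarith
  · have hnon := (hmain i hi hiN).2.2.2 k hk1 hklt
    apply hnon
    refine ⟨Or.inl hins, ⟨fun _ => sameCol_symm hcol, ?_⟩, ?_⟩
    · rintro (⟨h, -⟩ | ⟨h, -⟩) <;> exfalso
      · have := hins.1; linarith
      · have := hins.2; linarith
    · intro j' hj1 hj2
      exact (hmain i hi hiN).2.1 j' hj1 (hj2.trans hklt.le)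

end PinAux2

section PinAux3

/-- The full induction statement: the conclusion of the theorem for pin `i+1`. -/
private def Stmt (V H : Set ℝ) (p : ℕ → ℝ × ℝ) (i : ℕ) : Prop :=
    ((IsLeftP (p (i-1)) (p i) (p (i+1)) ∨ IsRightP (p (i-1)) (p i) (p (i+1))) →
      ∀ j, 1 ≤ j → j ≤ i → SameCol V (p j).1 (p (i+1)).1 →
        (PinLeft p j → (p (i+1)).1 < (p j).1) ∧
        (PinRight p j → (p j).1 < (p (i+1)).1)) ∧
    ((IsUpP (p (i-1)) (p i) (p (i+1)) ∨ IsDownP (p (i-1)) (p i) (p (i+1))) →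
      ∀ j, 1 ≤ j → j ≤ i → SameRow H (p j).2 (p (i+1)).2 →
        (PinUp p j → (p j).2 < (p (i+1)).2) ∧
        (PinDown p j → (p (i+1)).2 < (p j).2))

private lemma stmt_neg {V H : Set ℝ} {p : ℕ → ℝ × ℝ} {N : ℕ}
    (hgen : ∀ i, 1 ≤ i → i ≤ N → (p i).1 ∉ V ∧ (p i).2 ∉ H)
    {i : ℕ} (hi : 1 ≤ i) (hiN : i + 1 ≤ N) (h : Stmt V H p i) :
    Stmt (negS V) H (negP ∘ p) i := by
  obtain ⟨hH, hV⟩ := h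
  constructor
  · intro hq j hj1 hji hcol
    have hq' : IsLeftP (p (i-1)) (p i) (p (i+1)) ∨ IsRightP (p (i-1)) (p i) (p (i+1)) := by
      rcases hq with h | h
      · exact Or.inr (isLeftP_neg.mp h)
      · exact Or.inl (isRightP_neg.mp h)
    have hcol' : SameCol V (p j).1 (p (i+1)).1 :=
      (sameCol_neg (hgen j hj1 (by omega)).1 (hgen (i+1) (by omega) hiN).1).mp hcol
    have hres := hH hq' j hj1 hji hcol'
    constructor
    · intro hpl
      exact neg_lt_neg (hres.2 (pinLeft_neg.mp hpl))
    · intro hpr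
      exact neg_lt_neg (hres.1 (pinRight_neg.mp hpr))
  · intro hq j hj1 hji hrow
    have hq' : IsUpP (p (i-1)) (p i) (p (i+1)) ∨ IsDownP (p (i-1)) (p i) (p (i+1)) := by
      rcases hq with h | h
      · exact Or.inl (isUpP_neg.mp h)
      · exact Or.inr (isDownP_neg.mp h)
    have hres := hV hq' j hj1 hji hrow
    exact ⟨fun h1 => hres.1 (pinUp_neg.mp h1), fun h1 => hres.2 (pinDown_neg.mp h1)⟩

private lemma stmt_swap {V H : Set ℝ} {p : ℕ → ℝ × ℝ} {i : ℕ} (h : Stmt V H p i) :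
    Stmt H V (swapP ∘ p) i := by
  obtain ⟨hH, hV⟩ := h
  constructor
  · intro hq j hj1 hji hcol
    have hq' : IsUpP (p (i-1)) (p i) (p (i+1)) ∨ IsDownP (p (i-1)) (p i) (p (i+1)) :=
      hq.elim (fun h => Or.inr h) (fun h => Or.inl h)
    have hres := hV hq' j hj1 hji hcol
    exact ⟨fun h1 => hres.2 h1, fun h1 => hres.1 h1⟩
  · intro hq j hj1 hji hrow
    have hq' : IsLeftP (p (i-1)) (p i) (p (i+1)) ∨ IsRightP (p (i-1)) (p i) (p (i+1)) :=
      hq.elim (fun h => Or.inr h) (fun h => Or.inl h)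
    have hres := hH hq' j hj1 hji hrow
    exact ⟨fun h1 => hres.2 h1, fun h1 => hres.1 h1⟩

/-- The core argument: a horizontal pin `p (i+1)` lies left of every earlier left
pin in the same column. -/
private lemma core {V H : Set ℝ} {p : ℕ → ℝ × ℝ} {N : ℕ} (hp : IsGridPinSeq V H p N)
    (i : ℕ) (hi : 1 ≤ i) (hiN : i + 1 ≤ N)
    (IH : ∀ i', 1 ≤ i' → i' < i → i' + 1 ≤ N → Stmt V H p i')
    (hq : IsLeftP (p (i-1)) (p i) (p (i+1)) ∨ IsRightP (p (i-1)) (p i) (p (i+1))) :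
    ∀ j, 1 ≤ j → j ≤ i → SameCol V (p j).1 (p (i+1)).1 → PinLeft p j →
      (p (i+1)).1 < (p j).1 := by
  obtain ⟨h0x, h0y, hgen, hdist, hdist0, hadj, hmain⟩ := id hp
  intro j
  induction j using Nat.strong_induction_on with
  | _ j ihj =>
  intro hj1 hji hcol hpl
  by_contra hcon
  have hne : (p j).1 ≠ (p (i+1)).1 :=
    (hdist j (i+1) hj1 (by omega) (by omega) hiN (by omega)).1
  have hlt : (p j).1 < (p (i+1)).1 := lt_of_le_of_ne (not_lt.mp hcon) hne
  rcases hpl with ⟨hj1', h1lt⟩ | ⟨hj2, hjL⟩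
  · -- j = 1
    subst hj1'
    have hl1 := lem1 hp i hi hiN hq 1 le_rfl hji hcol
    have hA : min (p 0).1 (p 1).1 < (p (i+1)).1 := lt_of_le_of_lt (min_le_right _ _) hlt
    have hB : max (p 0).1 (p 1).1 ≤ (p (i+1)).1 := not_lt.mp (fun hb => hl1 ⟨hA, hb⟩)
    have h0lt : (p 0).1 < (p (i+1)).1 :=
      lt_of_le_of_ne (le_trans (le_max_left _ _) hB)
        (fun e => (hdist0 (i+1) (by omega) hiN).1 e.symm)
    have := (hcol (p 0).1 h0x).mpr h0lt
    linarith
  · -- j ≥ 2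
    have hjLx : (p j).1 < min (p (j-2)).1 (p (j-1)).1 := hjL.1
    have hl1j := lem1 hp i hi hiN hq j hj1 hji hcol
    have hAj : min (p (j-1)).1 (p j).1 < (p (i+1)).1 := lt_of_le_of_lt (min_le_right _ _) hlt
    have hBj : max (p (j-1)).1 (p j).1 ≤ (p (i+1)).1 := not_lt.mp (fun hb => hl1j ⟨hAj, hb⟩)
    have hjm1lt : (p (j-1)).1 < (p (i+1)).1 :=
      lt_of_le_of_ne (le_trans (le_max_left _ _) hBj)
        (hdist (j-1) (i+1) (by omega) (by omega) (by omega) hiN (by omega)).1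
    have hxjm1 : (p j).1 < (p (j-1)).1 := lt_of_lt_of_le hjLx (min_le_right _ _)
    have hcolm1 : SameCol V (p (j-1)).1 (p (i+1)).1 := sameCol_sandwich hcol hxjm1 hjm1lt
    rcases eq_or_lt_of_le hj2 with hj2e | hj3
    · -- j = 2
      have e1 : j - 1 = 1 := by omega
      have e2 : j - 2 = 0 := by omega
      rw [e1] at hcolm1 hjm1lt
      rw [e2, e1] at hjLx
      have hne10 : (p 1).1 ≠ (p 0).1 := (hdist0 1 le_rfl (by omega)).1
      rcases lt_or_gt_of_ne hne10 with hlt10 | hgt10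
      · have hl11 := lem1 hp i hi hiN hq 1 le_rfl (by omega) hcolm1
        have hA : min (p 0).1 (p 1).1 < (p (i+1)).1 := lt_of_le_of_lt (min_le_right _ _) hjm1lt
        have hB : max (p 0).1 (p 1).1 ≤ (p (i+1)).1 := not_lt.mp (fun hb => hl11 ⟨hA, hb⟩)
        have h0lt : (p 0).1 < (p (i+1)).1 :=
          lt_of_le_of_ne (le_trans (le_max_left _ _) hB)
            (fun e => (hdist0 (i+1) (by omega) hiN).1 e.symm)
        have := (hcolm1 (p 0).1 h0x).mpr h0lt
        linarith
      · have h0lt : (p 0).1 < (p (i+1)).1 := (hcolm1 (p 0).1 h0x).mp hgt10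
        have h0j : (p 0).1 < (p j).1 := (hcol (p 0).1 h0x).mpr h0lt
        have := lt_of_lt_of_le hjLx (min_le_left _ _)
        linarith
    · -- j ≥ 3
      have hcls1 := classify hp (j-1) (by omega) (by omega)
      rw [show j - 1 - 1 = j - 2 by omega, show j - 1 - 2 = j - 3 by omega] at hcls1
      rcases hcls1 with hH1 | hV1
      · -- p (j-1) horizontal: contradicts alternation
        have halt := altH hp (j-1) (by omega) (by omega)
          (by rw [show j-1-2 = j-3 by omega, show j-1-1 = j-2 by omega]; exact hH1)
        rw [show j - 1 + 1 = j by omega, show j - 1 - 1 = j - 2 by omega] at halt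
        exact halt (Or.inl hjL)
      · -- p (j-1) vertical
        have hm2 := hmain (j-2) (by omega) (by omega)
        rw [show j - 2 + 1 = j - 1 by omega, show j - 2 - 1 = j - 3 by omega] at hm2
        have hcol12 : SameCol V (p (j-1)).1 (p (j-2)).1 := (hm2.2.2.1).1 hV1
        have hcolm2 : SameCol V (p (j-2)).1 (p (i+1)).1 :=
          sameCol_trans (sameCol_symm hcol12) hcolm1
        have hl1m1 := lem1 hp i hi hiN hq (j-1) (by omega) (by omega) hcolm1
        rw [show j - 1 - 1 = j - 2 by omega] at hl1m1
        have hA : min (p (j-2)).1 (p (j-1)).1 < (p (i+1)).1 :=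
          lt_of_le_of_lt (min_le_right _ _) hjm1lt
        have hB : max (p (j-2)).1 (p (j-1)).1 ≤ (p (i+1)).1 :=
          not_lt.mp (fun hb => hl1m1 ⟨hA, hb⟩)
        have hjm2lt : (p (j-2)).1 < (p (i+1)).1 :=
          lt_of_le_of_ne (le_trans (le_max_left _ _) hB)
            (hdist (j-2) (i+1) (by omega) (by omega) (by omega) hiN (by omega)).1
        rcases eq_or_lt_of_le (show 3 ≤ j by omega) with hj3e | hj4
        · -- j = 3 : p 1 is in the column
          have e1 : j - 2 = 1 := by omega
          rw [e1] at hcolm2 hjm2lt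
          have hne10 : (p 1).1 ≠ (p 0).1 := (hdist0 1 le_rfl (by omega)).1
          rcases lt_or_gt_of_ne hne10 with hlt10 | hgt10
          · have hl11 := lem1 hp i hi hiN hq 1 le_rfl (by omega) hcolm2
            have hA1 : min (p 0).1 (p 1).1 < (p (i+1)).1 :=
              lt_of_le_of_lt (min_le_right _ _) hjm2lt
            have hB1 : max (p 0).1 (p 1).1 ≤ (p (i+1)).1 := not_lt.mp (fun hb => hl11 ⟨hA1, hb⟩)
            have h0lt : (p 0).1 < (p (i+1)).1 :=
              lt_of_le_of_ne (le_trans (le_max_left _ _) hB1)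
                (fun e => (hdist0 (i+1) (by omega) hiN).1 e.symm)
            have := (hcolm2 (p 0).1 h0x).mpr h0lt
            linarith
          · -- p 1 is a right pin: outer induction hypothesis applied to pin p j
            have hst := IH (j-1) (by omega) (by omega) (by omega)
            have hq2 : IsLeftP (p (j-1-1)) (p (j-1)) (p (j-1+1)) ∨
                IsRightP (p (j-1-1)) (p (j-1)) (p (j-1+1)) := by
              rw [show j-1-1 = j-2 by omega, show j-1+1 = j by omega]
              exact Or.inl hjL
            have hcol1j : SameCol V (p 1).1 (p (j-1+1)).1 := by
              rw [show j-1+1 = j by omega]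
              exact sameCol_trans hcolm2 (sameCol_symm hcol)
            have hres := (hst.1 hq2 1 le_rfl (by omega) hcol1j).2 (Or.inl ⟨rfl, hgt10⟩)
            rw [show j-1+1 = j by omega] at hres
            have hh := lt_of_lt_of_le hjLx (min_le_left _ _)
            rw [e1] at hh
            linarith
        · -- j ≥ 4
          have hcls2 := classify hp (j-2) (by omega) (by omega)
          rw [show j - 2 - 1 = j - 3 by omega, show j - 2 - 2 = j - 4 by omega] at hcls2
          rcases hcls2 with hH2 | hV2
          · rcases hH2 with hL2 | hR2
            · -- earlier left pin in the column: inner induction hypothesis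
              have hpl2 : PinLeft p (j-2) := Or.inr ⟨by omega,
                by rw [show j-2-2 = j-4 by omega, show j-2-1 = j-3 by omega]; exact hL2⟩
              have := ihj (j-2) (by omega) (by omega) (by omega) hcolm2 hpl2
              linarith
            · -- earlier right pin in the column: outer induction hypothesis at pin p j
              have hst := IH (j-1) (by omega) (by omega) (by omega)
              have hq2 : IsLeftP (p (j-1-1)) (p (j-1)) (p (j-1+1)) ∨
                  IsRightP (p (j-1-1)) (p (j-1)) (p (j-1+1)) := by
                rw [show j-1-1 = j-2 by omega, show j-1+1 = j by omega]
                exact Or.inl hjL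
              have hcol2j : SameCol V (p (j-2)).1 (p (j-1+1)).1 := by
                rw [show j-1+1 = j by omega]
                exact sameCol_trans hcolm2 (sameCol_symm hcol)
              have hpr2 : PinRight p (j-2) := Or.inr ⟨by omega,
                by rw [show j-2-2 = j-4 by omega, show j-2-1 = j-3 by omega]; exact hR2⟩
              have hres := (hst.1 hq2 (j-2) (by omega) (by omega) hcol2j).2 hpr2
              rw [show j-1+1 = j by omega] at hres
              have hh := lt_of_lt_of_le hjLx (min_le_left _ _)
              linarith
          · -- p (j-2) vertical: contradicts alternation with vertical p (j-1)
            have halt := altV hp (j-2) (by omega) (by omega)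
              (by rw [show j-2-2 = j-4 by omega, show j-2-1 = j-3 by omega]; exact hV2)
            rw [show j - 2 + 1 = j - 1 by omega, show j - 2 - 1 = j - 3 by omega] at halt
            exact halt hV1

end PinAux3

section PinAux4

/-- The horizontal half of the statement, via `core` and its x-negation. -/
private lemma horiz {V H : Set ℝ} {p : ℕ → ℝ × ℝ} {N : ℕ} (hp : IsGridPinSeq V H p N)
    (i : ℕ) (hi : 1 ≤ i) (hiN : i + 1 ≤ N)
    (IH : ∀ i', 1 ≤ i' → i' < i → i' + 1 ≤ N → Stmt V H p i') :
    (IsLeftP (p (i-1)) (p i) (p (i+1)) ∨ IsRightP (p (i-1)) (p i) (p (i+1))) →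
      ∀ j, 1 ≤ j → j ≤ i → SameCol V (p j).1 (p (i+1)).1 →
        (PinLeft p j → (p (i+1)).1 < (p j).1) ∧
        (PinRight p j → (p j).1 < (p (i+1)).1) := by
  intro hq j hj1 hji hcol
  constructor
  · exact core hp i hi hiN IH hq j hj1 hji hcol
  · intro hpr
    have hgen := hp.2.2.1
    have hp' : IsGridPinSeq (negS V) H (negP ∘ p) N := gps_neg hp
    have IH' : ∀ i', 1 ≤ i' → i' < i → i' + 1 ≤ N → Stmt (negS V) H (negP ∘ p) i' :=
      fun i' a b c => stmt_neg hgen a c (IH i' a b c)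
    have hq' : IsLeftP ((negP ∘ p) (i-1)) ((negP ∘ p) i) ((negP ∘ p) (i+1)) ∨
        IsRightP ((negP ∘ p) (i-1)) ((negP ∘ p) i) ((negP ∘ p) (i+1)) := by
      rcases hq with h | h
      · exact Or.inr (isRightP_neg.mpr h)
      · exact Or.inl (isLeftP_neg.mpr h)
    have hcol' : SameCol (negS V) ((negP ∘ p) j).1 ((negP ∘ p) (i+1)).1 :=
      (sameCol_neg (hgen j hj1 (by omega)).1 (hgen (i+1) (by omega) hiN).1).mpr hcol
    have hres := core hp' i hi hiN IH' hq' j hj1 hji hcol' (pinLeft_neg.mpr hpr)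
    have h2 : -(p (i+1)).1 < -(p j).1 := hres
    linarith

private lemma stmt_all : ∀ (i : ℕ) (V H : Set ℝ) (p : ℕ → ℝ × ℝ) (N : ℕ),
    IsGridPinSeq V H p N → 1 ≤ i → i + 1 ≤ N → Stmt V H p i := by
  intro i
  induction i using Nat.strong_induction_on with
  | _ i IH =>
  intro V H p N hp hi hiN
  have IHs : ∀ i', 1 ≤ i' → i' < i → i' + 1 ≤ N → Stmt V H p i' :=
    fun i' a b c => IH i' b V H p N hp a c
  constructor
  · exact horiz hp i hi hiN IHs
  · have hp2 : IsGridPinSeq H V (swapP ∘ p) N := gps_swap hp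
    have IH2 : ∀ i', 1 ≤ i' → i' < i → i' + 1 ≤ N → Stmt H V (swapP ∘ p) i' :=
      fun i' a b c => stmt_swap (IHs i' a b c)
    have hh := horiz hp2 i hi hiN IH2
    intro hq j hj1 hji hrow
    have hq' : IsLeftP ((swapP ∘ p) (i-1)) ((swapP ∘ p) i) ((swapP ∘ p) (i+1)) ∨
        IsRightP ((swapP ∘ p) (i-1)) ((swapP ∘ p) i) ((swapP ∘ p) (i+1)) :=
      hq.elim (fun h => Or.inr h) (fun h => Or.inl h)
    have hres := hh hq' j hj1 hji hrow
    exact ⟨fun h1 => hres.2 h1, fun h1 => hres.1 h1⟩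

end PinAux4

/-- **Lemma.**  If `p (i+1)` is a left pin, it lies further left than all
previous left pins in its column and to the right of all previous right pins
in its column; analogously for right, up and down pins. -/
theorem pin_placement (V H : Set ℝ) (hV : V.Finite) (hH : H.Finite)
    (p : ℕ → ℝ × ℝ) (N : ℕ) (hp : IsGridPinSeq V H p N)
    (i : ℕ) (hi : 1 ≤ i) (hiN : i + 1 ≤ N) :
    ((IsLeftP (p (i-1)) (p i) (p (i+1)) ∨ IsRightP (p (i-1)) (p i) (p (i+1))) →
      ∀ j, 1 ≤ j → j ≤ i → SameCol V (p j).1 (p (i+1)).1 →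
        (PinLeft p j → (p (i+1)).1 < (p j).1) ∧
        (PinRight p j → (p j).1 < (p (i+1)).1)) ∧
    ((IsUpP (p (i-1)) (p i) (p (i+1)) ∨ IsDownP (p (i-1)) (p i) (p (i+1))) →
      ∀ j, 1 ≤ j → j ≤ i → SameRow H (p j).2 (p (i+1)).2 →
        (PinUp p j → (p j).2 < (p (i+1)).2) ∧
        (PinDown p j → (p (i+1)).2 < (p j).2)) :=
  stmt_all i V H p N hp hi hiN
end

section
/- Let p_1,…,p_i be a grid pin sequence of length i ≥ 2 in an m×n gridded plane. If q and q′ are two points, each of which extends p_1,…,p_i to a grid pin sequence of length i+1 as a horizontal pin, and q and q′ lie in the same column of the grid, then the configurations p_1,…,p_i,q and p_1,…,p_i,q′ are order isomorphic via an isomorphism fixing p_1,…,p_i, and q and q′ lie in the same cell of the grid. The analogous statement holds when q and q′ are vertical pins lying in the same row of the grid. -/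
lemma gap_iff {a b x : ℝ} (h : ¬(min a b < x ∧ x < max a b)) (ha : x ≠ a) (hb : x ≠ b) :
    (x < a ↔ x < b) ∧ (a < x ↔ b < x) := by
  have h1 := min_le_left a b
  have h2 := min_le_right a b
  have h3 := le_max_left a b
  have h4 := le_max_right a b
  rw [not_and_or, not_lt, not_lt] at h
  rcases ha.lt_or_gt with hxa|hxa <;> rcases hb.lt_or_gt with hxb|hxb
  · exact ⟨iff_of_true hxa hxb, iff_of_false (by linarith) (by linarith)⟩
  · exfalso; rcases h with h|h <;> linarith
  · exfalso; rcases h with h|h <;> linarith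
  · exact ⟨iff_of_false (by linarith) (by linarith), iff_of_true hxa hxb⟩

lemma exists_mono_lt (S : Finset ℝ) (x y : ℝ)
    (h : ∀ s ∈ S, (s < x ↔ s < y) ∧ (x < s ↔ y < s)) (hxy : x < y) :
    ∃ f : ℝ → ℝ, StrictMono f ∧ (∀ s ∈ S, f s = s) ∧ f x = y := by
  classical
  obtain ⟨β, hyβ, hβs⟩ : ∃ β, y < β ∧ ∀ s ∈ S, s < x ∨ β ≤ s := by
    by_cases hne : (S.filter (fun s => x < s)).Nonempty
    · refine ⟨(S.filter (fun s => x < s)).min' hne, ?_, ?_⟩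
      · have hm := (S.filter (fun s => x < s)).min'_mem hne
        rw [Finset.mem_filter] at hm
        exact (h _ hm.1).2.mp hm.2
      · intro s hs
        have hsx : s ≠ x := fun he => lt_irrefl x (by
          have hiff := (h s hs).1
          rw [he] at hiff
          exact hiff.mpr hxy)
        rcases lt_or_ge s x with h1|h1
        · exact Or.inl h1
        · refine Or.inr (Finset.min'_le _ _ ?_)
          rw [Finset.mem_filter]
          exact ⟨hs, lt_of_le_of_ne h1 (Ne.symm hsx)⟩
    · refine ⟨y + 1, by linarith, ?_⟩
      intro s hs
      left
      have hsx : s ≠ x := fun he => lt_irrefl x (by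
        have hiff := (h s hs).1
        rw [he] at hiff
        exact hiff.mpr hxy)
      rcases lt_or_ge s x with h1|h1
      · exact h1
      · exact absurd ⟨s, Finset.mem_filter.mpr ⟨hs, lt_of_le_of_ne h1 (Ne.symm hsx)⟩⟩ hne
  have hxβ : x < β := lt_trans hxy hyβ
  set c := (β - y) / (β - x) with hc_def
  have hc : 0 < c := div_pos (by linarith) (by linarith)
  have hcb : (β - x) * c = β - y := by
    rw [hc_def, mul_comm, div_mul_cancel₀ _ (sub_ne_zero_of_ne (ne_of_gt hxβ))]
  refine ⟨fun t => if t < x then t else if β ≤ t then t else y + (t - x) * c, ?_, ?_, ?_⟩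
  · intro u v huv
    dsimp only
    by_cases h1 : u < x <;> by_cases h2 : v < x
    · simp only [if_pos h1, if_pos h2]; exact huv
    · simp only [if_pos h1, if_neg h2]
      by_cases h3 : β ≤ v
      · simp only [if_pos h3]; linarith
      · simp only [if_neg h3]
        nlinarith [mul_nonneg (sub_nonneg.mpr (not_lt.mp h2)) hc.le]
    · exact absurd (huv.trans h2) h1
    · simp only [if_neg h1, if_neg h2]
      by_cases h3 : β ≤ u
      · have h4 : β ≤ v := le_of_lt (lt_of_le_of_lt h3 huv)
        simp only [if_pos h3, if_pos h4]; exact huv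
      · simp only [if_neg h3]
        by_cases h4 : β ≤ v
        · simp only [if_pos h4]
          have hlt : (u - x) * c < (β - x) * c :=
            mul_lt_mul_of_pos_right (by linarith [not_le.mp h3]) hc
          linarith
        · simp only [if_neg h4]
          have hlt : (u - x) * c < (v - x) * c :=
            mul_lt_mul_of_pos_right (by linarith) hc
          linarith
  · intro s hs
    rcases hβs s hs with h1|h1
    · simp [h1]
    · have hns : ¬ s < x := not_lt.mpr (le_trans (le_of_lt hxβ) h1)
      simp [hns, h1]
  · have h1 : ¬ x < x := lt_irrefl x
    have h2 : ¬ β ≤ x := not_le.mpr hxβ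
    simp [h1, h2]

lemma exists_mono (S : Finset ℝ) (x y : ℝ)
    (h : ∀ s ∈ S, (s < x ↔ s < y) ∧ (x < s ↔ y < s)) :
    ∃ f : ℝ → ℝ, StrictMono f ∧ (∀ s ∈ S, f s = s) ∧ f x = y := by
  rcases lt_trichotomy x y with hxy | rfl | hxy
  · exact exists_mono_lt S x y h hxy
  · exact ⟨id, strictMono_id, fun s _ => rfl, rfl⟩
  · have h' : ∀ s ∈ S.image (fun s => -s), (s < -x ↔ s < -y) ∧ (-x < s ↔ -y < s) := by
      intro s hs
      obtain ⟨t, htS, rfl⟩ := Finset.mem_image.mp hs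
      constructor
      · constructor <;> intro hh
        · exact neg_lt_neg_iff.mpr ((h t htS).2.mp (by linarith [neg_lt_neg_iff.mp hh]))
        · exact neg_lt_neg_iff.mpr ((h t htS).2.mpr (by linarith [neg_lt_neg_iff.mp hh]))
      · constructor <;> intro hh
        · exact neg_lt_neg_iff.mpr ((h t htS).1.mp (by linarith [neg_lt_neg_iff.mp hh]))
        · exact neg_lt_neg_iff.mpr ((h t htS).1.mpr (by linarith [neg_lt_neg_iff.mp hh]))
    obtain ⟨f, hf, hfix, hfx⟩ := exists_mono_lt (S.image (fun s => -s)) (-x) (-y) h' (by linarith)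
    refine ⟨fun t => -f (-t), ?_, ?_, ?_⟩
    · intro u v huv
      have := hf (neg_lt_neg huv)
      simpa using this
    · intro s hs
      have : f (-s) = -s := hfix (-s) (Finset.mem_image_of_mem _ hs)
      simp [this]
    · have : f (-x) = -y := hfx
      simp [this]

lemma keyNy (V H : Set ℝ) (p : ℕ → ℝ × ℝ) (i : ℕ) (w : ℝ × ℝ)
    (hwH : w.2 ∉ H)
    (hpH : ∀ k, 1 ≤ k → k ≤ i → (p k).2 ∉ H)
    (hext : ∀ j, 1 ≤ j → j ≤ i → ¬ InRect w (p (j-1)) (p j))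
    (hnon : ∀ j, 1 ≤ j → j < i →
      ¬ ((SepX w (p (j-1)) (p j) ∨ SepY w (p (j-1)) (p j)) ∧
         RCAgree V H (p (j-1)) (p j) w ∧
         (∀ j', 1 ≤ j' → j' ≤ j → ¬ InRect w (p (j'-1)) (p j'))))
    (j : ℕ) (hj1 : 1 ≤ j) (hj2 : j < i)
    (hs : SepY w (p (j-1)) (p j)) :
    ∃ h ∈ H, min w.2 (p j).2 < h ∧ h < max w.2 (p j).2 := by
  have hA : (IsUpP (p (j-1)) (p j) w ∨ IsDownP (p (j-1)) (p j) w) → SameCol V w.1 (p j).1 := by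
    intro hud
    exfalso
    have hsx : SepX w (p (j-1)) (p j) := by rcases hud with h|h; exacts [h.2, h.2]
    exact hext j hj1 (le_of_lt hj2)
      ⟨le_of_lt hsx.1, le_of_lt hsx.2, le_of_lt hs.1, le_of_lt hs.2⟩
  have hrc : ¬ RCAgree V H (p (j-1)) (p j) w :=
    fun hrc => hnon j hj1 hj2 ⟨Or.inr hs, hrc, fun j' a b => hext j' a (le_trans b (le_of_lt hj2))⟩
  have hB : ¬ ((IsLeftP (p (j-1)) (p j) w ∨ IsRightP (p (j-1)) (p j) w) → SameRow H w.2 (p j).2) :=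
    fun hB => hrc ⟨hA, hB⟩
  have hnsr : ¬ SameRow H w.2 (p j).2 := fun hsr => hB (fun _ => hsr)
  have hex : ∃ h, h ∈ H ∧ ¬(h < w.2 ↔ h < (p j).2) := by
    by_contra hcon
    push_neg at hcon
    exact hnsr (fun h hh => hcon h hh)
  obtain ⟨h, hH, hne⟩ := hex
  have hne1 : (p j).2 ≠ h := fun e => hpH j hj1 (le_of_lt hj2) (e ▸ hH)
  have hne2 : w.2 ≠ h := fun e => hwH (e ▸ hH)
  by_cases hlt : h < w.2
  · by_cases hlt2 : h < (p j).2
    · exact absurd (iff_of_true hlt hlt2) hne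
    · have hgt : (p j).2 < h := lt_of_le_of_ne (not_lt.mp hlt2) hne1
      exact ⟨h, hH, lt_of_le_of_lt (min_le_right _ _) hgt, lt_of_lt_of_le hlt (le_max_left _ _)⟩
  · by_cases hlt2 : h < (p j).2
    · have hgt : w.2 < h := lt_of_le_of_ne (not_lt.mp hlt) hne2
      exact ⟨h, hH, lt_of_le_of_lt (min_le_left _ _) hgt, lt_of_lt_of_le hlt2 (le_max_right _ _)⟩
    · exact absurd (iff_of_false hlt hlt2) hne

lemma keyNx (V H : Set ℝ) (p : ℕ → ℝ × ℝ) (i : ℕ) (w : ℝ × ℝ)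
    (hwV : w.1 ∉ V)
    (hpV : ∀ k, 1 ≤ k → k ≤ i → (p k).1 ∉ V)
    (hext : ∀ j, 1 ≤ j → j ≤ i → ¬ InRect w (p (j-1)) (p j))
    (hnon : ∀ j, 1 ≤ j → j < i →
      ¬ ((SepX w (p (j-1)) (p j) ∨ SepY w (p (j-1)) (p j)) ∧
         RCAgree V H (p (j-1)) (p j) w ∧
         (∀ j', 1 ≤ j' → j' ≤ j → ¬ InRect w (p (j'-1)) (p j'))))
    (j : ℕ) (hj1 : 1 ≤ j) (hj2 : j < i)
    (hs : SepX w (p (j-1)) (p j)) :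
    ∃ v ∈ V, min w.1 (p j).1 < v ∧ v < max w.1 (p j).1 := by
  have hA : (IsLeftP (p (j-1)) (p j) w ∨ IsRightP (p (j-1)) (p j) w) → SameRow H w.2 (p j).2 := by
    intro hud
    exfalso
    have hsy : SepY w (p (j-1)) (p j) := by rcases hud with h|h; exacts [h.2, h.2]
    exact hext j hj1 (le_of_lt hj2)
      ⟨le_of_lt hs.1, le_of_lt hs.2, le_of_lt hsy.1, le_of_lt hsy.2⟩
  have hrc : ¬ RCAgree V H (p (j-1)) (p j) w :=
    fun hrc => hnon j hj1 hj2 ⟨Or.inl hs, hrc, fun j' a b => hext j' a (le_trans b (le_of_lt hj2))⟩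
  have hB : ¬ ((IsUpP (p (j-1)) (p j) w ∨ IsDownP (p (j-1)) (p j) w) → SameCol V w.1 (p j).1) :=
    fun hB => hrc ⟨hB, hA⟩
  have hnsc : ¬ SameCol V w.1 (p j).1 := fun hsc => hB (fun _ => hsc)
  have hex : ∃ v, v ∈ V ∧ ¬(v < w.1 ↔ v < (p j).1) := by
    by_contra hcon
    push_neg at hcon
    exact hnsc (fun v hv => hcon v hv)
  obtain ⟨v, hv, hne⟩ := hex
  have hne1 : (p j).1 ≠ v := fun e => hpV j hj1 (le_of_lt hj2) (e ▸ hv)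
  have hne2 : w.1 ≠ v := fun e => hwV (e ▸ hv)
  by_cases hlt : v < w.1
  · by_cases hlt2 : v < (p j).1
    · exact absurd (iff_of_true hlt hlt2) hne
    · have hgt : (p j).1 < v := lt_of_le_of_ne (not_lt.mp hlt2) hne1
      exact ⟨v, hv, lt_of_le_of_lt (min_le_right _ _) hgt, lt_of_lt_of_le hlt (le_max_left _ _)⟩
  · by_cases hlt2 : v < (p j).1
    · have hgt : w.1 < v := lt_of_le_of_ne (not_lt.mp hlt) hne2
      exact ⟨v, hv, lt_of_le_of_lt (min_le_left _ _) hgt, lt_of_lt_of_le hlt2 (le_max_right _ _)⟩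
    · exact absurd (iff_of_false hlt hlt2) hne

lemma extract (V H : Set ℝ) (p : ℕ → ℝ × ℝ) (i : ℕ) (hi : 2 ≤ i) (q : ℝ × ℝ)
    (hq : IsGridPinSeq V H (Function.update p (i+1) q) (i+1)) :
    (q.1 ∉ V ∧ q.2 ∉ H) ∧
    (∀ k, k ≤ i → q.1 ≠ (p k).1 ∧ q.2 ≠ (p k).2) ∧
    (∀ j, 1 ≤ j → j ≤ i → ¬ InRect q (p (j-1)) (p j)) ∧
    RCAgree V H (p (i-1)) (p i) q ∧
    (∀ j, 1 ≤ j → j < i →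
      ¬ ((SepX q (p (j-1)) (p j) ∨ SepY q (p (j-1)) (p j)) ∧
         RCAgree V H (p (j-1)) (p j) q ∧
         (∀ j', 1 ≤ j' → j' ≤ j → ¬ InRect q (p (j'-1)) (p j')))) := by
  obtain ⟨-, -, c1, c2, c3, -, c5⟩ := hq
  have hlt : ∀ k, k ≤ i → Function.update p (i+1) q k = p k :=
    fun k hk => Function.update_of_ne (by omega : k ≠ i + 1) q p
  have heq : Function.update p (i+1) q (i+1) = q := Function.update_self (i+1) q p
  obtain ⟨-, e, r, n⟩ := c5 i (by omega) (by omega)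
  refine ⟨?_, ?_, ?_, ?_, ?_⟩
  · have := c1 (i+1) (by omega) le_rfl
    rwa [heq] at this
  · intro k hk
    by_cases hk0 : k = 0
    · subst hk0
      have := c3 (i+1) (by omega) le_rfl
      rwa [heq, hlt 0 (by omega)] at this
    · have := c2 (i+1) k (by omega) le_rfl (by omega) (by omega) (by omega)
      rwa [heq, hlt k (by omega)] at this
  · intro j a b
    have := e j a b
    rwa [heq, hlt (j-1) (by omega), hlt j (by omega)] at this
  · rwa [heq, hlt (i-1) (by omega), hlt i le_rfl] at r
  · intro j a b hcon
    refine n j a b ?_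
    obtain ⟨cs, cr, ce⟩ := hcon
    refine ⟨?_, ?_, ?_⟩
    · rw [heq, hlt (j-1) (by omega), hlt j (by omega)]; exact cs
    · rw [heq, hlt (j-1) (by omega), hlt j (by omega)]; exact cr
    · intro j' x y
      rw [heq, hlt (j'-1) (by omega), hlt j' (by omega)]
      exact ce j' x y

lemma key (V H : Set ℝ) (p : ℕ → ℝ × ℝ) (i : ℕ) (hi : 2 ≤ i)
    (hp : IsGridPinSeq V H p i)
    (q q' : ℝ × ℝ)
    (hq : IsGridPinSeq V H (Function.update p (i+1) q) (i+1))
    (hq' : IsGridPinSeq V H (Function.update p (i+1) q') (i+1))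
    (hdq : IsLeftP (p (i-1)) (p i) q ∨ IsRightP (p (i-1)) (p i) q)
    (hdq' : IsLeftP (p (i-1)) (p i) q' ∨ IsRightP (p (i-1)) (p i) q')
    (hcol : SameCol V q.1 q'.1) :
    (∃ f g : ℝ → ℝ, StrictMono f ∧ StrictMono g ∧
        (∀ j, 1 ≤ j → j ≤ i → f (p j).1 = (p j).1 ∧ g (p j).2 = (p j).2) ∧
        f q.1 = q'.1 ∧ g q.2 = q'.2) ∧
      SameCol V q.1 q'.1 ∧ SameRow H q.2 q'.2 := by
  obtain ⟨h0V, h0H, hpc⟩ := hp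
  obtain ⟨hpgen, -, -, -, -⟩ := hpc
  obtain ⟨⟨hqV, hqH⟩, hqd, hqe, hqr, hqn⟩ := extract V H p i hi q hq
  obtain ⟨⟨hq'V, hq'H⟩, hq'd, hq'e, hq'r, hq'n⟩ := extract V H p i hi q' hq'
  have hpH2 : ∀ k, 1 ≤ k → k ≤ i → (p k).2 ∉ H := fun k a b => (hpgen k a b).2
  have hpV2 : ∀ k, 1 ≤ k → k ≤ i → (p k).1 ∉ V := fun k a b => (hpgen k a b).1
  have hsepq : SepY q (p (i-1)) (p i) := by rcases hdq with h|h; exacts [h.2, h.2]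
  have hsepq' : SepY q' (p (i-1)) (p i) := by rcases hdq' with h|h; exacts [h.2, h.2]
  have hrow_q : SameRow H q.2 (p i).2 := hqr.2 hdq
  have hrow_q' : SameRow H q'.2 (p i).2 := hq'r.2 hdq'
  have hrow : SameRow H q.2 q'.2 := fun h hh => (hrow_q h hh).trans ((hrow_q' h hh).symm)
  have hHfree : ∀ h ∈ H, ¬(min q.2 q'.2 < h ∧ h < max q.2 q'.2) := by
    rintro h hh ⟨h1, h2⟩
    have e := hrow h hh
    rw [min_lt_iff] at h1
    rw [lt_max_iff] at h2
    rcases h1 with h1|h1 <;> rcases h2 with h2|h2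
    · linarith
    · have := e.mpr h2; linarith
    · have := e.mp h2; linarith
    · linarith
  have hVfree : ∀ v ∈ V, ¬(min q.1 q'.1 < v ∧ v < max q.1 q'.1) := by
    rintro v hv ⟨h1, h2⟩
    have e := hcol v hv
    rw [min_lt_iff] at h1
    rw [lt_max_iff] at h2
    rcases h1 with h1|h1 <;> rcases h2 with h2|h2
    · linarith
    · have := e.mpr h2; linarith
    · have := e.mp h2; linarith
    · linarith
  have hdB : ∀ w, w = q ∨ w = q' →
      IsLeftP (p (i-1)) (p i) w ∨ IsRightP (p (i-1)) (p i) w := by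
    rintro w (rfl|rfl); exacts [hdq, hdq']
  have hdistB : ∀ w, w = q ∨ w = q' → ∀ k, k ≤ i → w.1 ≠ (p k).1 ∧ w.2 ≠ (p k).2 := by
    rintro w (rfl|rfl); exacts [hqd, hq'd]
  have nyB : ∀ w, w = q ∨ w = q' → ∀ j, 1 ≤ j → j < i → SepY w (p (j-1)) (p j) →
      ∃ h ∈ H, min w.2 (p j).2 < h ∧ h < max w.2 (p j).2 := by
    rintro w (rfl|rfl)
    exacts [keyNy V H p i _ hqH hpH2 hqe hqn, keyNy V H p i _ hq'H hpH2 hq'e hq'n]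
  have nxB : ∀ w, w = q ∨ w = q' → ∀ j, 1 ≤ j → j < i → SepX w (p (j-1)) (p j) →
      ∃ v ∈ V, min w.1 (p j).1 < v ∧ v < max w.1 (p j).1 := by
    rintro w (rfl|rfl)
    exacts [keyNx V H p i _ hqV hpV2 hqe hqn, keyNx V H p i _ hq'V hpV2 hq'e hq'n]
  -- the y-gap lemma
  have hgapY : ∀ k, k ≤ i → 1 ≤ k → ¬(min q.2 q'.2 < (p k).2 ∧ (p k).2 < max q.2 q'.2) := by
    intro k
    induction k using Nat.strong_induction_on with
    | _ k IH =>
      rintro hki hk1 ⟨hb1, hb2⟩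
      by_cases hk : k = i
      · subst hk
        have hu : min ((p (k-1)).2) ((p k).2) < min q.2 q'.2 := lt_min hsepq.1 hsepq'.1
        have hv : max q.2 q'.2 < max ((p (k-1)).2) ((p k).2) := max_lt hsepq.2 hsepq'.2
        rcases min_choice ((p (k-1)).2) ((p k).2) with e|e <;>
          rcases max_choice ((p (k-1)).2) ((p k).2) with e2|e2 <;> linarith
      · have hki' : k < i := by omega
        have hout : ¬(min q.2 q'.2 < (p (k-1)).2 ∧ (p (k-1)).2 < max q.2 q'.2) := by
          by_cases hk1' : k = 1
          · subst hk1'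
            exact hHfree (p 0).2 h0H
          · exact IH (k-1) (by omega) (by omega) (by omega)
        have hne1 : (p (k-1)).2 ≠ q.2 := ((hqd (k-1) (by omega)).2).symm
        have hne2 : (p (k-1)).2 ≠ q'.2 := ((hq'd (k-1) (by omega)).2).symm
        have hcase : (p (k-1)).2 < min q.2 q'.2 ∨ max q.2 q'.2 < (p (k-1)).2 := by
          rcases lt_or_ge ((p (k-1)).2) (min q.2 q'.2) with h|h
          · exact Or.inl h
          · right
            have hmin_ne : min q.2 q'.2 ≠ (p (k-1)).2 := by
              rcases min_choice q.2 q'.2 with e|e <;> rw [e]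
              exacts [hne1.symm, hne2.symm]
            have h1 : min q.2 q'.2 < (p (k-1)).2 := lt_of_le_of_ne h hmin_ne
            have h2 : max q.2 q'.2 ≤ (p (k-1)).2 := by
              by_contra hcc
              exact hout ⟨h1, lt_of_not_ge hcc⟩
            have hmax_ne : max q.2 q'.2 ≠ (p (k-1)).2 := by
              rcases max_choice q.2 q'.2 with e|e <;> rw [e]
              exacts [hne1.symm, hne2.symm]
            exact lt_of_le_of_ne h2 hmax_ne
        rcases hcase with hc|hc
        · obtain ⟨w, hw, hwe⟩ : ∃ w, (w = q ∨ w = q') ∧ w.2 = min q.2 q'.2 := by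
            rcases min_choice q.2 q'.2 with e|e
            exacts [⟨q, Or.inl rfl, e.symm⟩, ⟨q', Or.inr rfl, e.symm⟩]
          have hsep : SepY w (p (k-1)) (p k) := by
            constructor
            · exact lt_of_le_of_lt (min_le_left _ _) (by rw [hwe]; exact hc)
            · rw [hwe]
              exact lt_of_lt_of_le hb1 (le_max_right _ _)
          obtain ⟨h, hH, hh1, hh2⟩ := nyB w hw k hk1 hki' hsep
          have hm : min w.2 ((p k).2) = w.2 := min_eq_left (by rw [hwe]; exact le_of_lt hb1)
          have hM : max w.2 ((p k).2) = (p k).2 := max_eq_right (by rw [hwe]; exact le_of_lt hb1)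
          rw [hm, hwe] at hh1
          rw [hM] at hh2
          exact hHfree h hH ⟨hh1, lt_trans hh2 hb2⟩
        · obtain ⟨w, hw, hwe⟩ : ∃ w, (w = q ∨ w = q') ∧ w.2 = max q.2 q'.2 := by
            rcases max_choice q.2 q'.2 with e|e
            exacts [⟨q, Or.inl rfl, e.symm⟩, ⟨q', Or.inr rfl, e.symm⟩]
          have hsep : SepY w (p (k-1)) (p k) := by
            constructor
            · exact lt_of_le_of_lt (min_le_right _ _) (by rw [hwe]; exact hb2)
            · rw [hwe]
              exact lt_of_lt_of_le hc (le_max_left _ _)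
          obtain ⟨h, hH, hh1, hh2⟩ := nyB w hw k hk1 hki' hsep
          have hm : min w.2 ((p k).2) = (p k).2 := min_eq_right (by rw [hwe]; exact le_of_lt hb2)
          have hM : max w.2 ((p k).2) = w.2 := max_eq_left (by rw [hwe]; exact le_of_lt hb2)
          rw [hm] at hh1
          rw [hM, hwe] at hh2
          exact hHfree h hH ⟨lt_trans hb1 hh1, hh2⟩
  -- the x-gap lemma
  have hgapX : ∀ k, k ≤ i → 1 ≤ k → ¬(min q.1 q'.1 < (p k).1 ∧ (p k).1 < max q.1 q'.1) := by
    intro k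
    induction k using Nat.strong_induction_on with
    | _ k IH =>
      rintro hki hk1 ⟨hb1, hb2⟩
      by_cases hk : k = i
      · subst hk
        obtain ⟨w1, hw1, he1⟩ : ∃ w, (w = q ∨ w = q') ∧ w.1 = min q.1 q'.1 := by
          rcases min_choice q.1 q'.1 with e|e
          exacts [⟨q, Or.inl rfl, e.symm⟩, ⟨q', Or.inr rfl, e.symm⟩]
        obtain ⟨w2, hw2, he2⟩ : ∃ w, (w = q ∨ w = q') ∧ w.1 = max q.1 q'.1 := by
          rcases max_choice q.1 q'.1 with e|e
          exacts [⟨q, Or.inl rfl, e.symm⟩, ⟨q', Or.inr rfl, e.symm⟩]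
        have hL : min q.1 q'.1 < (p (k-1)).1 := by
          rcases hdB w1 hw1 with hl|hr
          · have := hl.1
            rw [he1] at this
            exact lt_of_lt_of_le this (min_le_left _ _)
          · exfalso
            have := hr.1
            rw [he1] at this
            linarith [le_max_right ((p (k-1)).1) ((p k).1)]
        have hR : (p (k-1)).1 < max q.1 q'.1 := by
          rcases hdB w2 hw2 with hl|hr
          · exfalso
            have := hl.1
            rw [he2] at this
            linarith [min_le_right ((p (k-1)).1) ((p k).1)]
          · have := hr.1
            rw [he2] at this
            exact lt_of_le_of_lt (le_max_left _ _) this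
        exact IH (k-1) (by omega) (by omega) (by omega) ⟨hL, hR⟩
      · have hki' : k < i := by omega
        have hout : ¬(min q.1 q'.1 < (p (k-1)).1 ∧ (p (k-1)).1 < max q.1 q'.1) := by
          by_cases hk1' : k = 1
          · subst hk1'
            exact hVfree (p 0).1 h0V
          · exact IH (k-1) (by omega) (by omega) (by omega)
        have hne1 : (p (k-1)).1 ≠ q.1 := ((hqd (k-1) (by omega)).1).symm
        have hne2 : (p (k-1)).1 ≠ q'.1 := ((hq'd (k-1) (by omega)).1).symm
        have hcase : (p (k-1)).1 < min q.1 q'.1 ∨ max q.1 q'.1 < (p (k-1)).1 := by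
          rcases lt_or_ge ((p (k-1)).1) (min q.1 q'.1) with h|h
          · exact Or.inl h
          · right
            have hmin_ne : min q.1 q'.1 ≠ (p (k-1)).1 := by
              rcases min_choice q.1 q'.1 with e|e <;> rw [e]
              exacts [hne1.symm, hne2.symm]
            have h1 : min q.1 q'.1 < (p (k-1)).1 := lt_of_le_of_ne h hmin_ne
            have h2 : max q.1 q'.1 ≤ (p (k-1)).1 := by
              by_contra hcc
              exact hout ⟨h1, lt_of_not_ge hcc⟩
            have hmax_ne : max q.1 q'.1 ≠ (p (k-1)).1 := by
              rcases max_choice q.1 q'.1 with e|e <;> rw [e]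
              exacts [hne1.symm, hne2.symm]
            exact lt_of_le_of_ne h2 hmax_ne
        rcases hcase with hc|hc
        · obtain ⟨w, hw, hwe⟩ : ∃ w, (w = q ∨ w = q') ∧ w.1 = min q.1 q'.1 := by
            rcases min_choice q.1 q'.1 with e|e
            exacts [⟨q, Or.inl rfl, e.symm⟩, ⟨q', Or.inr rfl, e.symm⟩]
          have hsep : SepX w (p (k-1)) (p k) := by
            constructor
            · exact lt_of_le_of_lt (min_le_left _ _) (by rw [hwe]; exact hc)
            · rw [hwe]
              exact lt_of_lt_of_le hb1 (le_max_right _ _)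
          obtain ⟨v, hv, hh1, hh2⟩ := nxB w hw k hk1 hki' hsep
          have hm : min w.1 ((p k).1) = w.1 := min_eq_left (by rw [hwe]; exact le_of_lt hb1)
          have hM : max w.1 ((p k).1) = (p k).1 := max_eq_right (by rw [hwe]; exact le_of_lt hb1)
          rw [hm, hwe] at hh1
          rw [hM] at hh2
          exact hVfree v hv ⟨hh1, lt_trans hh2 hb2⟩
        · obtain ⟨w, hw, hwe⟩ : ∃ w, (w = q ∨ w = q') ∧ w.1 = max q.1 q'.1 := by
            rcases max_choice q.1 q'.1 with e|e
            exacts [⟨q, Or.inl rfl, e.symm⟩, ⟨q', Or.inr rfl, e.symm⟩]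
          have hsep : SepX w (p (k-1)) (p k) := by
            constructor
            · exact lt_of_le_of_lt (min_le_right _ _) (by rw [hwe]; exact hb2)
            · rw [hwe]
              exact lt_of_lt_of_le hc (le_max_left _ _)
          obtain ⟨v, hv, hh1, hh2⟩ := nxB w hw k hk1 hki' hsep
          have hm : min w.1 ((p k).1) = (p k).1 := min_eq_right (by rw [hwe]; exact le_of_lt hb2)
          have hM : max w.1 ((p k).1) = w.1 := max_eq_left (by rw [hwe]; exact le_of_lt hb2)
          rw [hm] at hh1
          rw [hM, hwe] at hh2
          exact hVfree v hv ⟨lt_trans hb1 hh1, hh2⟩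
  -- assemble the order isomorphism
  obtain ⟨f, hf, hffix, hfx⟩ := exists_mono ((Finset.Icc 1 i).image (fun k => (p k).1)) q.1 q'.1
    (by
      intro s hs
      obtain ⟨k, hk, rfl⟩ := Finset.mem_image.mp hs
      rw [Finset.mem_Icc] at hk
      exact gap_iff (hgapX k hk.2 hk.1) ((hqd k hk.2).1.symm) ((hq'd k hk.2).1.symm))
  obtain ⟨g, hg, hgfix, hgx⟩ := exists_mono ((Finset.Icc 1 i).image (fun k => (p k).2)) q.2 q'.2
    (by
      intro s hs
      obtain ⟨k, hk, rfl⟩ := Finset.mem_image.mp hs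
      rw [Finset.mem_Icc] at hk
      exact gap_iff (hgapY k hk.2 hk.1) ((hqd k hk.2).2.symm) ((hq'd k hk.2).2.symm))
  refine ⟨⟨f, g, hf, hg, ?_, hfx, hgx⟩, hcol, hrow⟩
  intro j h1 h2
  constructor
  · exact hffix _ (Finset.mem_image_of_mem _ (Finset.mem_Icc.mpr ⟨h1, h2⟩))
  · exact hgfix _ (Finset.mem_image_of_mem _ (Finset.mem_Icc.mpr ⟨h1, h2⟩))

def swpt (z : ℝ × ℝ) : ℝ × ℝ := (z.2, z.1)

lemma sw_InRect (x a b : ℝ × ℝ) : InRect (swpt x) (swpt a) (swpt b) ↔ InRect x a b := by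
  constructor <;> rintro ⟨a1, a2, a3, a4⟩ <;> exact ⟨a3, a4, a1, a2⟩

lemma sw_RC (V H : Set ℝ) (a b c : ℝ × ℝ) :
    RCAgree H V (swpt a) (swpt b) (swpt c) ↔ RCAgree V H a b c := by
  constructor <;> rintro ⟨r1, r2⟩ <;> exact ⟨fun hh => r2 hh.symm, fun hh => r1 hh.symm⟩

lemma sw_seq (V H : Set ℝ) (p : ℕ → ℝ × ℝ) (N : ℕ) (h : IsGridPinSeq V H p N) :
    IsGridPinSeq H V (fun k => swpt (p k)) N := by
  obtain ⟨h0V, h0H, c1, c2, c3, c4, c5⟩ := h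
  refine ⟨h0H, h0V, ?_, ?_, ?_, ?_, ?_⟩
  · intro k hk1 hk2
    exact ⟨(c1 k hk1 hk2).2, (c1 k hk1 hk2).1⟩
  · intro a b h1 h2 h3 h4 h5
    exact ⟨(c2 a b h1 h2 h3 h4 h5).2, (c2 a b h1 h2 h3 h4 h5).1⟩
  · intro a h1 h2
    exact ⟨(c3 a h1 h2).2, (c3 a h1 h2).1⟩
  · intro h1
    exact ⟨(c4 h1).2, (c4 h1).1⟩
  · intro k h1 h2
    obtain ⟨s, e, r, n⟩ := c5 k h1 h2
    refine ⟨s.symm, ?_, ?_, ?_⟩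
    · intro j a b hin
      exact e j a b ((sw_InRect _ _ _).mp hin)
    · exact (sw_RC V H _ _ _).mpr r
    · intro j a b hcon
      obtain ⟨cs, cr, ce⟩ := hcon
      refine n j a b ⟨cs.symm, (sw_RC V H _ _ _).mp cr, ?_⟩
      intro j' x y hin
      exact ce j' x y ((sw_InRect _ _ _).mpr hin)

/-- **Lemma.**  Let `p 1, …, p i` be a grid pin sequence of length `i ≥ 2`.
Any two points `q, q'` extending it by one horizontal pin and lying in the
same column of the grid give order-isomorphic configurations (via an
isomorphism fixing `p 1, …, p i`), and `q` and `q'` lie in the same cell of the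
grid; analogously for vertical pins lying in the same row. -/
theorem pin_placement_unique (V H : Set ℝ) (hV : V.Finite) (hH : H.Finite)
    (p : ℕ → ℝ × ℝ) (i : ℕ) (hi : 2 ≤ i) (hp : IsGridPinSeq V H p i) :
    (∀ q q' : ℝ × ℝ,
      IsGridPinSeq V H (Function.update p (i+1) q) (i+1) →
      IsGridPinSeq V H (Function.update p (i+1) q') (i+1) →
      (IsLeftP (p (i-1)) (p i) q ∨ IsRightP (p (i-1)) (p i) q) →
      (IsLeftP (p (i-1)) (p i) q' ∨ IsRightP (p (i-1)) (p i) q') →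
      SameCol V q.1 q'.1 →
      ((∃ f g : ℝ → ℝ, StrictMono f ∧ StrictMono g ∧
          (∀ j, 1 ≤ j → j ≤ i → f (p j).1 = (p j).1 ∧ g (p j).2 = (p j).2) ∧
          f q.1 = q'.1 ∧ g q.2 = q'.2) ∧
        SameCol V q.1 q'.1 ∧ SameRow H q.2 q'.2)) ∧
    (∀ q q' : ℝ × ℝ,
      IsGridPinSeq V H (Function.update p (i+1) q) (i+1) →
      IsGridPinSeq V H (Function.update p (i+1) q') (i+1) →
      (IsUpP (p (i-1)) (p i) q ∨ IsDownP (p (i-1)) (p i) q) →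
      (IsUpP (p (i-1)) (p i) q' ∨ IsDownP (p (i-1)) (p i) q') →
      SameRow H q.2 q'.2 →
      ((∃ f g : ℝ → ℝ, StrictMono f ∧ StrictMono g ∧
          (∀ j, 1 ≤ j → j ≤ i → f (p j).1 = (p j).1 ∧ g (p j).2 = (p j).2) ∧
          f q.1 = q'.1 ∧ g q.2 = q'.2) ∧
        SameCol V q.1 q'.1 ∧ SameRow H q.2 q'.2)) := by
  
  have hupd : ∀ q : ℝ × ℝ, (fun k => swpt (Function.update p (i+1) q k)) =
      Function.update (fun k => swpt (p k)) (i+1) (swpt q) := by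
    intro q
    funext k
    by_cases hk : k = i + 1
    · subst hk
      simp [Function.update_self]
    · simp [Function.update_of_ne hk]
  constructor
  · intro q q' h1 h2 h3 h4 h5
    exact key V H p i hi hp q q' h1 h2 h3 h4 h5
  · intro q q' h1 h2 h3 h4 h5
    have h1' := sw_seq V H _ _ h1
    have h2' := sw_seq V H _ _ h2
    rw [hupd q] at h1'
    rw [hupd q'] at h2'
    have hkey := key H V (fun k => swpt (p k)) i hi (sw_seq V H p i hp) (swpt q) (swpt q')
      h1' h2' h3.symm h4.symm h5
    obtain ⟨⟨f, g, hf, hg, hfix, hfq, hgq⟩, hc1, hc2⟩ := hkey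
    refine ⟨⟨g, f, hg, hf, fun j a b => ⟨(hfix j a b).2, (hfix j a b).1⟩, hgq, hfq⟩, hc2, h5⟩
end

section
/- Every permutation class containing only finitely many simple permutations is partially well-ordered, i.e. contains no infinite antichain under the containment order. -/
/-! Core definitions: finite permutations, pattern containment, permutation
classes, partial well-order, monotone classes, simple permutations,
direct/skew sums, grid classes and the graph of a gridding matrix. -/

/-- A finite permutation: a length `n` together with a bijection of `Fin n`. -/
abbrev Perm' : Type := Σ n : ℕ, Equiv.Perm (Fin n)

namespace Perm'

/-- Pattern containment: `σ.Le π` means that `σ` is contained in `π`,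
i.e. some subsequence of `π` is order isomorphic to `σ`. -/
def Le (σ π : Perm') : Prop :=
  ∃ f : Fin σ.1 → Fin π.1, StrictMono f ∧
    ∀ a b : Fin σ.1, (σ.2 a < σ.2 b ↔ π.2 (f a) < π.2 (f b))

/-- The inverse of a permutation. -/
def inverse (π : Perm') : Perm' := ⟨π.1, π.2.symm⟩

/-- The reverse of a permutation: `r(π)(i) = π(k+1-i)`. -/
def reverse (π : Perm') : Perm' := ⟨π.1, Fin.revPerm.trans π.2⟩

/-- The complement of a permutation: `c(π)(i) = k+1-π(i)`. -/
def complement (π : Perm') : Perm' := ⟨π.1, π.2.trans Fin.revPerm⟩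

/-- The direct sum `σ ⊕ τ` of two permutations. -/
def dsum (σ τ : Perm') : Perm' :=
  ⟨σ.1 + τ.1, finSumFinEquiv.symm.trans ((Equiv.sumCongr σ.2 τ.2).trans finSumFinEquiv)⟩

/-- The skew sum `σ ⊖ τ` of two permutations. -/
def skewSum (σ τ : Perm') : Perm' :=
  ⟨σ.1 + τ.1, finSumFinEquiv.symm.trans ((Equiv.sumCongr σ.2 τ.2).trans
    ((Equiv.sumComm (Fin σ.1) (Fin τ.1)).trans
      (finSumFinEquiv.trans (finCongr (Nat.add_comm τ.1 σ.1)))))⟩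

end Perm'

/-- The empty permutation. -/
def emptyPerm : Perm' := ⟨0, 1⟩

/-- The permutation 12. -/
def perm12 : Perm' := ⟨2, 1⟩

/-- The permutation 21. -/
def perm21 : Perm' := ⟨2, Equiv.swap 0 1⟩

/-- A permutation class: a set of permutations closed downward under containment. -/
def IsPermClass (C : Set Perm') : Prop := ∀ π ∈ C, ∀ σ : Perm', σ.Le π → σ ∈ C

/-- An antichain: a set of pairwise incomparable permutations. -/
def IsPermAntichain (A : Set Perm') : Prop := ∀ α ∈ A, ∀ β ∈ A, α ≠ β → ¬ α.Le β

/-- A set of permutations is partially well-ordered if it contains no infinite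
antichain. (Note that pairwise incomparability forces injectivity of `g`.) -/
def IsPwo (C : Set Perm') : Prop :=
  ¬ ∃ g : ℕ → Perm', (∀ i, g i ∈ C) ∧ ∀ i j : ℕ, i ≠ j → ¬ (g i).Le (g j)

/-- `Av(21)`: the class of increasing permutations. -/
def Av21 : Set Perm' := {π | ∀ a b : Fin π.1, a ≤ b → π.2 a ≤ π.2 b}

/-- `Av(12)`: the class of decreasing permutations. -/
def Av12 : Set Perm' := {π | ∀ a b : Fin π.1, a ≤ b → π.2 b ≤ π.2 a}

/-- The monotone classes. -/
def IsMonotoneClass (C : Set Perm') : Prop := C = Av21 ∨ C = Av12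

/-- A permutation is simple if it has no interval of size strictly between 1 and
its length: whenever the set of positions `[a,b]` is mapped onto a contiguous
set of values, either `a = b` or `[a,b]` is everything. -/
def IsSimple (π : Perm') : Prop :=
  ∀ a b : Fin π.1, a ≤ b →
    (∃ c : ℕ, ∀ i : Fin π.1,
      ((a ≤ i ∧ i ≤ b) ↔ (c ≤ (π.2 i : ℕ) ∧ (π.2 i : ℕ) ≤ c + ((b : ℕ) - (a : ℕ))))) →
    (a = b ∨ (b : ℕ) - (a : ℕ) + 1 = π.1)

/-- The class `⊕21` of all direct sums of patterns of `21`. -/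
def sumClosure21 : Set Perm' :=
  {π | ∃ L : List Perm', (∀ α ∈ L, α.Le perm21) ∧ π = L.foldr Perm'.dsum emptyPerm}

/-- The class `⊖12` of all skew sums of patterns of `12`. -/
def skewClosure12 : Set Perm' :=
  {π | ∃ L : List Perm', (∀ α ∈ L, α.Le perm12) ∧ π = L.foldr Perm'.skewSum emptyPerm}

/-- The set of points of `π` indexed by `S` is order isomorphic to `τ`. -/
def IsPatternOf (π : Perm') (S : Set (Fin π.1)) (τ : Perm') : Prop :=
  ∃ g : Fin τ.1 → Fin π.1, StrictMono g ∧ (∀ a, g a ∈ S) ∧ (∀ i ∈ S, ∃ a, g a = i) ∧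
    ∀ a b : Fin τ.1, (τ.2 a < τ.2 b ↔ π.2 (g a) < π.2 (g b))

/-- A gridding of a permutation `π` into an `m × n` grid, recorded as the induced
cell assignment `κ` of the points of `π`: columns are weakly increasing in
position and rows weakly increasing in value.  (This is equivalent to recording
the `m-1` vertical and `n-1` horizontal dividing lines.) -/
def IsGridding {m n : ℕ} (π : Perm') (κ : Fin π.1 → Fin m × Fin n) : Prop :=
  (∀ i i' : Fin π.1, i ≤ i' → (κ i).1 ≤ (κ i').1) ∧
  (∀ i i' : Fin π.1, π.2 i ≤ π.2 i' → (κ i).2 ≤ (κ i').2)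

/-- An `M`-gridding: a gridding in which the content of each cell `(s,t)` is
empty or order isomorphic to a member of `M s t`. -/
def IsMGridding {m n : ℕ} (M : Fin m → Fin n → Set Perm') (π : Perm')
    (κ : Fin π.1 → Fin m × Fin n) : Prop :=
  IsGridding π κ ∧
  ∀ s : Fin m, ∀ t : Fin n,
    (∀ i, κ i ≠ (s, t)) ∨ ∃ τ ∈ M s t, IsPatternOf π {i | κ i = (s, t)} τ

/-- `π` is `M`-griddable. -/
def Griddable {m n : ℕ} (M : Fin m → Fin n → Set Perm') (π : Perm') : Prop :=
  ∃ κ, IsMGridding M π κ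

/-- The grid class of `M`: all `M`-griddable permutations. -/
def GridClass {m n : ℕ} (M : Fin m → Fin n → Set Perm') : Set Perm' :=
  {π | Griddable M π}

/-- A gridding matrix: every entry is an infinite permutation class or empty. -/
def IsGriddingMatrix {m n : ℕ} (M : Fin m → Fin n → Set Perm') : Prop :=
  ∀ i j, (IsPermClass (M i j) ∧ (M i j).Infinite) ∨ M i j = ∅

/-- The non-empty cells of `M`: the vertices of the graph of `M`. -/
def GridCell {m n : ℕ} (M : Fin m → Fin n → Set Perm') : Type :=
  {p : Fin m × Fin n // M p.1 p.2 ≠ ∅}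

/-- Adjacency for the graph of `M`: two cells sharing a row or a column with
only empty cells in between. -/
def GridAdj {m n : ℕ} (M : Fin m → Fin n → Set Perm') (p q : Fin m × Fin n) : Prop :=
  p ≠ q ∧
  ((p.2 = q.2 ∧ ∀ i : Fin m, min p.1 q.1 < i → i < max p.1 q.1 → M i p.2 = ∅) ∨
   (p.1 = q.1 ∧ ∀ j : Fin n, min p.2 q.2 < j → j < max p.2 q.2 → M p.1 j = ∅))

/-- The graph `G_M` of a gridding matrix `M`. -/
def gridGraph {m n : ℕ} (M : Fin m → Fin n → Set Perm') : SimpleGraph (GridCell M) where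
  Adj p q := GridAdj M p.1 q.1
  symm := by
    constructor
    rintro ⟨p, hp⟩ ⟨q, hq⟩ ⟨hne, h⟩
    refine ⟨Ne.symm hne, ?_⟩
    rcases h with ⟨h2, hb⟩ | ⟨h1, hb⟩
    · exact Or.inl ⟨h2.symm, fun i hi hi' => by
        rw [← h2]; exact hb i (by rwa [min_comm]) (by rwa [max_comm])⟩
    · exact Or.inr ⟨h1.symm, fun j hj hj' => by
        rw [← h1]; exact hb j (by rwa [min_comm]) (by rwa [max_comm])⟩
  loopless := by constructor; rintro ⟨p, hp⟩ ⟨hne, h⟩; exact hne rfl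

/-- A class is monotone griddable if it is griddable by some matrix all of whose
entries are monotone classes or empty. -/
def MonotoneGriddable (C : Set Perm') : Prop :=
  ∃ (m n : ℕ) (M : Fin m → Fin n → Set Perm'),
    (∀ i j, IsMonotoneClass (M i j) ∨ M i j = ∅) ∧ ∀ π ∈ C, Griddable M π


/-! ### Auxiliary development: basic properties of containment -/

theorem Le_refl (π : Perm') : π.Le π := ⟨id, strictMono_id, fun _ _ => Iff.rfl⟩

theorem Le_trans {σ τ π : Perm'} (h1 : σ.Le τ) (h2 : τ.Le π) : σ.Le π := by
  obtain ⟨f, hf, hf2⟩ := h1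
  obtain ⟨g, hg, hg2⟩ := h2
  exact ⟨g ∘ f, hg.comp hf, fun a b => (hf2 a b).trans (hg2 (f a) (f b))⟩

instance : IsRefl Perm' Perm'.Le := ⟨Le_refl⟩
instance : IsTrans Perm' Perm'.Le := ⟨fun _ _ _ => Le_trans⟩
instance : IsPreorder Perm' Perm'.Le := {}

theorem le_of_length_zero {σ π : Perm'} (h : σ.1 = 0) : σ.Le π := by
  refine ⟨fun a => absurd a.2 (by omega), ?_, ?_⟩
  · intro a; exact absurd a.2 (by omega)
  · intro a; exact absurd a.2 (by omega)

theorem le_of_length_one {σ π : Perm'} (h : σ.1 = 1) (h2 : 1 ≤ π.1) : σ.Le π := by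
  refine ⟨fun _ => ⟨0, by omega⟩, ?_, ?_⟩
  · intro a b hab
    have ha : (a:ℕ) < 1 := h ▸ a.2
    have hb : (b:ℕ) < 1 := h ▸ b.2
    exact absurd (Fin.lt_def.mp hab) (by omega)
  · intro a b
    have ha : (a:ℕ) < 1 := h ▸ a.2
    have hb : (b:ℕ) < 1 := h ▸ b.2
    have : a = b := Fin.ext (by omega)
    subst this
    simp
theorem exists_pattern (π : Perm') (S : Finset (Fin π.1)) :
    ∃ τ : Perm', τ.1 = S.card ∧ IsPatternOf π ↑S τ := by
  classical
  set k := S.card with hk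
  set posf : Fin k → Fin π.1 := fun a => ((S.orderIsoOfFin rfl a) : Fin π.1) with hposf
  have posf_mem : ∀ a, posf a ∈ S := fun a => (S.orderIsoOfFin rfl a).2
  have posf_mono : StrictMono posf := fun a b hab => by
    have := (S.orderIsoOfFin rfl).lt_iff_lt.mpr hab
    exact this
  set T : Finset (Fin π.1) := S.image (fun i => π.2 i) with hT
  have hTcard : T.card = k := by
    rw [hT, Finset.card_image_of_injective _ π.2.injective]
  have vmem : ∀ a, π.2 (posf a) ∈ T := fun a => Finset.mem_image_of_mem _ (posf_mem a)
  set f : Fin k → Fin k := fun a => (T.orderIsoOfFin hTcard).symm ⟨π.2 (posf a), vmem a⟩ with hf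
  have finj : Function.Injective f := by
    intro a b hab
    have := (T.orderIsoOfFin hTcard).symm.injective hab
    have h2 : π.2 (posf a) = π.2 (posf b) := congrArg Subtype.val this
    exact posf_mono.injective (π.2.injective h2)
  have fbij : Function.Bijective f := Finite.injective_iff_bijective.mp finj
  refine ⟨⟨k, Equiv.ofBijective f fbij⟩, rfl, posf, posf_mono, fun a => posf_mem a, ?_, ?_⟩
  · intro i hi
    refine ⟨(S.orderIsoOfFin rfl).symm ⟨i, hi⟩, ?_⟩
    show ((S.orderIsoOfFin rfl) ((S.orderIsoOfFin rfl).symm ⟨i, hi⟩) : Fin π.1) = i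
    rw [OrderIso.apply_symm_apply]
  · intro a b
    show f a < f b ↔ _
    constructor
    · intro hab
      have := (T.orderIsoOfFin hTcard).symm.lt_iff_lt.mp hab
      exact this
    · intro hab
      exact (T.orderIsoOfFin hTcard).symm.lt_iff_lt.mpr hab


def IsInflation (π σ : Perm') (α : Fin σ.1 → Perm') : Prop :=
  ∃ κ : Fin π.1 → Fin σ.1,
    (∀ i i' : Fin π.1, i ≤ i' → κ i ≤ κ i') ∧
    (∀ i i' : Fin π.1, κ i ≠ κ i' → (π.2 i < π.2 i' ↔ σ.2 (κ i) < σ.2 (κ i'))) ∧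
    ∀ t : Fin σ.1, IsPatternOf π {i | κ i = t} (α t)

/-- points of different fibers are position-ordered by fiber index -/
theorem fiber_lt {n m : ℕ} {κ : Fin n → Fin m}
    (hκ : ∀ i i' : Fin n, i ≤ i' → κ i ≤ κ i') {x y : Fin n} (h : κ x < κ y) : x < y := by
  by_contra hxy
  push_neg at hxy
  exact absurd (hκ y x hxy) (not_le.mpr h)

theorem component_le {π σ : Perm'} {α : Fin σ.1 → Perm'} (h : IsInflation π σ α) (t : Fin σ.1) :
    (α t).Le π := by
  obtain ⟨κ, h1, h2, h3⟩ := h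
  obtain ⟨g, hg1, hg2, hg3, hg4⟩ := h3 t
  exact ⟨g, hg1, hg4⟩

theorem skeleton_le {π σ : Perm'} {α : Fin σ.1 → Perm'} (h : IsInflation π σ α)
    (hne : ∀ t, 1 ≤ (α t).1) : σ.Le π := by
  obtain ⟨κ, h1, h2, h3⟩ := h
  -- representative of each fiber
  have rep : ∀ t : Fin σ.1, ∃ i : Fin π.1, κ i = t := by
    intro t
    obtain ⟨g, hg1, hg2, hg3, hg4⟩ := h3 t
    exact ⟨g ⟨0, hne t⟩, hg2 _⟩
  choose r hr using rep
  refine ⟨r, ?_, ?_⟩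
  · intro t t' htt'
    exact fiber_lt h1 (by rw [hr, hr]; exact htt')
  · intro t t'
    rcases eq_or_ne t t' with rfl | hne'
    · simp
    · have := h2 (r t) (r t') (by rw [hr, hr]; exact hne')
      rw [hr, hr] at this
      exact this.symm

theorem inflation_mono {π π' σ : Perm'} {α α' : Fin σ.1 → Perm'}
    (h : IsInflation π σ α) (h' : IsInflation π' σ α')
    (hle : ∀ t, (α t).Le (α' t)) : π.Le π' := by
  obtain ⟨κ, h1, h2, h3⟩ := h
  obtain ⟨κ', h1', h2', h3'⟩ := h'
  choose g hg1 hg2 hg3 hg4 using h3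
  choose g' hg1' hg2' hg3' hg4' using h3'
  choose f hf1 hf2 using hle
  have idx : ∀ i : Fin π.1, ∃ a : Fin (α (κ i)).1, g (κ i) a = i := fun i => hg3 (κ i) i rfl
  choose ind hind using idx
  set F : Fin π.1 → Fin π'.1 := fun i => g' (κ i) (f (κ i) (ind i)) with hF
  have hFfib : ∀ i, κ' (F i) = κ i := fun i => hg2' (κ i) _
  have Fspec : ∀ (j : Fin π.1) (t : Fin σ.1), κ j = t → ∀ (b : Fin (α t).1), g t b = j →
      F j = g' t (f t b) := by
    intro j t ht
    subst ht
    intro b hb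
    have : ind j = b := (hg1 (κ j)).injective (by rw [hind, hb])
    rw [hF]
    simp only [this]
  refine ⟨F, ?_, ?_⟩
  · intro i i' hii'
    rcases eq_or_ne (κ i) (κ i') with he | hne'
    · obtain ⟨b, hb⟩ := hg3 (κ i) i' he.symm
      rw [Fspec i (κ i) rfl (ind i) (hind i), Fspec i' (κ i) he.symm b hb]
      have hab : ind i < b := by
        have : g (κ i) (ind i) < g (κ i) b := by rw [hind, hb]; exact hii'
        exact (hg1 (κ i)).lt_iff_lt.mp this
      exact (hg1' (κ i)) ((hf1 (κ i)) hab)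
    · have : κ i < κ i' := lt_of_le_of_ne (h1 i i' hii'.le) hne'
      refine fiber_lt h1' ?_
      rw [hFfib, hFfib]
      exact this
  · intro i i'
    rcases eq_or_ne (κ i) (κ i') with he | hne'
    · obtain ⟨b, hb⟩ := hg3 (κ i) i' he.symm
      rw [Fspec i (κ i) rfl (ind i) (hind i), Fspec i' (κ i) he.symm b hb]
      have h₁ : π.2 i < π.2 i' ↔ (α (κ i)).2 (ind i) < (α (κ i)).2 b := by
        rw [hg4 (κ i) (ind i) b, hind, hb]
      rw [h₁, hf2 (κ i) (ind i) b, hg4' (κ i)]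
    · have hcross := h2 i i' hne'
      have hcross' := h2' (F i) (F i') (by rw [hFfib, hFfib]; exact hne')
      rw [hFfib, hFfib] at hcross'
      rw [hcross, hcross']


def one1 : Perm' := ⟨1, 1⟩

theorem singleton_pattern (π : Perm') (x : Fin π.1) : IsPatternOf π {x} one1 := by
  have hsub : Subsingleton (Fin one1.1) := by
    show Subsingleton (Fin 1)
    infer_instance
  refine ⟨fun _ => x, ?_, fun a => rfl, fun i hi => ⟨⟨0, one_pos⟩, hi.symm⟩, ?_⟩
  · intro a b hab
    rw [hsub.elim a b] at hab
    exact absurd hab (lt_irrefl b)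
  · intro a b
    rw [hsub.elim a b]
    simp

theorem of_kappa (π σ : Perm') (κ : Fin π.1 → Fin σ.1)
    (h1 : ∀ i i' : Fin π.1, i ≤ i' → κ i ≤ κ i')
    (h2 : ∀ i i' : Fin π.1, κ i ≠ κ i' → (π.2 i < π.2 i' ↔ σ.2 (κ i) < σ.2 (κ i'))) :
    ∃ α : Fin σ.1 → Perm', IsInflation π σ α ∧
      ∀ t, (α t).1 = (Finset.univ.filter (fun i => κ i = t)).card := by
  classical
  have key : ∀ t : Fin σ.1, ∃ τ : Perm',
      τ.1 = (Finset.univ.filter (fun i => κ i = t)).card ∧ IsPatternOf π {i | κ i = t} τ := by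
    intro t
    obtain ⟨τ, hτ1, hτ2⟩ := exists_pattern π (Finset.univ.filter (fun i => κ i = t))
    refine ⟨τ, hτ1, ?_⟩
    have : (↑(Finset.univ.filter (fun i => κ i = t)) : Set (Fin π.1)) = {i | κ i = t} := by
      ext i; simp
    rwa [this] at hτ2
  choose α hα1 hα2 using key
  exact ⟨α, ⟨κ, h1, h2, hα2⟩, hα1⟩

theorem compose {π ρ σ : Perm'} {δ : Fin ρ.1 → Perm'} {β : Fin σ.1 → Perm'}
    (hπρ : IsInflation π ρ δ) (hρσ : IsInflation ρ σ β)
    (hδ : ∀ t, 1 ≤ (δ t).1) (hβ : ∀ s, 1 ≤ (β s).1) (hσ : 2 ≤ σ.1) (hn : 1 ≤ π.1) :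
    ∃ γ : Fin σ.1 → Perm', IsInflation π σ γ ∧ ∀ s, 1 ≤ (γ s).1 ∧ (γ s).1 < π.1 := by
  classical
  obtain ⟨κ0, h01, h02, h03⟩ := hπρ
  obtain ⟨κ1, h11, h12, h13⟩ := hρσ
  -- nonempty fibers
  have fib0 : ∀ t : Fin ρ.1, ∃ i : Fin π.1, κ0 i = t := by
    intro t
    obtain ⟨g, hg1, hg2, hg3, hg4⟩ := h03 t
    exact ⟨g ⟨0, hδ t⟩, hg2 _⟩
  have fib1 : ∀ s : Fin σ.1, ∃ x : Fin ρ.1, κ1 x = s := by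
    intro s
    obtain ⟨g, hg1, hg2, hg3, hg4⟩ := h13 s
    exact ⟨g ⟨0, hβ s⟩, hg2 _⟩
  have fib : ∀ s : Fin σ.1, ∃ i : Fin π.1, κ1 (κ0 i) = s := by
    intro s
    obtain ⟨x, hx⟩ := fib1 s
    obtain ⟨i, hi⟩ := fib0 x
    exact ⟨i, by rw [hi, hx]⟩
  obtain ⟨γ, hγ, hγcard⟩ := of_kappa π σ (fun i => κ1 (κ0 i))
    (fun i i' h => h11 _ _ (h01 i i' h))
    (by
      intro i i' hne
      have hne0 : κ0 i ≠ κ0 i' := fun hc => hne (congrArg κ1 hc)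
      exact (h02 i i' hne0).trans (h12 _ _ hne))
  refine ⟨γ, hγ, ?_⟩
  intro s
  obtain ⟨s', hss'⟩ := Fintype.exists_ne_of_one_lt_card (by simp; omega) s
  obtain ⟨i, hi⟩ := fib s
  obtain ⟨i', hi'⟩ := fib s'
  constructor
  · rw [hγcard s]
    refine Finset.card_pos.mpr ⟨i, ?_⟩
    simp [hi]
  · rw [hγcard s]
    have hsub : Finset.univ.filter (fun i => κ1 (κ0 i) = s) ⊂ Finset.univ := by
      refine Finset.ssubset_univ_iff.mpr ?_
      intro hc
      have : i' ∈ Finset.univ.filter (fun i => κ1 (κ0 i) = s) := by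
        rw [hc]; exact Finset.mem_univ i'
      simp [hi'] at this
      exact hss' this
    calc (Finset.univ.filter (fun i => κ1 (κ0 i) = s)).card
        < Finset.univ.card := Finset.card_lt_card hsub
      _ = π.1 := by simp

theorem contract (π : Perm') (h2 : 2 ≤ π.1) (hns : ¬ IsSimple π) :
    ∃ (ρ : Perm') (δ : Fin ρ.1 → Perm'), 2 ≤ ρ.1 ∧ ρ.1 < π.1 ∧
      (∀ t, 1 ≤ (δ t).1) ∧ IsInflation π ρ δ := by
  classical
  simp only [IsSimple, not_forall] at hns
  obtain ⟨a, b, hab, hwin, hne⟩ := hns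
  push_neg at hne
  obtain ⟨hne1, hne2⟩ := hne
  obtain ⟨cv, hcv⟩ := hwin
  have haleb : (a : ℕ) ≤ b := Fin.le_def.mp hab
  have hb : (b : ℕ) < π.1 := b.2
  have halt : (a : ℕ) < (b : ℕ) := lt_of_le_of_ne haleb (fun hc => hne1 (Fin.ext hc))
  -- the contracted position set: everything except (a, b]
  set S : Finset (Fin π.1) := (Finset.Ioc a b)ᶜ with hS
  have hmemS : ∀ i : Fin π.1, i ∈ S ↔ ¬(a < i ∧ i ≤ b) := by
    intro i
    simp [hS, Finset.mem_Ioc]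
  have hScard : S.card = π.1 - ((b : ℕ) - (a : ℕ)) := by
    rw [hS, Finset.card_compl, Fin.card_Ioc]
    simp
  have haS : a ∈ S := (hmemS a).mpr (by simp)
  obtain ⟨ρ, hρcard, g, hg1, hg2, hg3, hg4⟩ := exists_pattern π S
  -- representative map
  set r : Fin π.1 → Fin π.1 := fun i => if a ≤ i ∧ i ≤ b then a else i with hr
  have hrS : ∀ i, r i ∈ S := by
    intro i
    by_cases h : a ≤ i ∧ i ≤ b
    · simp only [hr, if_pos h]
      exact haS
    · simp only [hr, if_neg h]
      rw [hmemS]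
      intro ⟨hc1, hc2⟩
      exact h ⟨hc1.le, hc2⟩
  have hrint : ∀ i : Fin π.1, (a ≤ i ∧ i ≤ b) → r i = a := by
    intro i h; rw [hr]; simp [h]
  have hrout : ∀ i : Fin π.1, ¬(a ≤ i ∧ i ≤ b) → r i = i := by
    intro i h; simp only [hr, if_neg h]
  -- κ
  have hκex : ∀ i : Fin π.1, ∃ c : Fin ρ.1, g c = r i := fun i => hg3 (r i) (hrS i)
  choose κ hκ using hκex
  -- r is monotone
  have hrmono : ∀ i i' : Fin π.1, i ≤ i' → r i ≤ r i' := by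
    intro i i' hii'
    by_cases h : a ≤ i ∧ i ≤ b
    · rw [hrint i h]
      by_cases h' : a ≤ i' ∧ i' ≤ b
      · rw [hrint i' h']
      · rw [hrout i' h']
        exact le_trans h.1 hii'
    · rw [hrout i h]
      by_cases h' : a ≤ i' ∧ i' ≤ b
      · rw [hrint i' h']
        -- i ≤ i' ≤ b and i not in interval, so i < a
        by_contra hc
        push_neg at hc
        exact h ⟨hc.le, le_trans hii' h'.2⟩
      · rw [hrout i' h']
        exact hii'
  -- value window facts
  have hin : ∀ i : Fin π.1, (a ≤ i ∧ i ≤ b) →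
      cv ≤ (π.2 i : ℕ) ∧ (π.2 i : ℕ) ≤ cv + ((b:ℕ) - (a:ℕ)) := fun i h => (hcv i).mp h
  have hout : ∀ i : Fin π.1, ¬(a ≤ i ∧ i ≤ b) →
      (π.2 i : ℕ) < cv ∨ cv + ((b:ℕ) - (a:ℕ)) < (π.2 i : ℕ) := by
    intro i h
    have := (hcv i).mpr
    by_contra hc
    push_neg at hc
    exact h (this ⟨hc.1, hc.2⟩)
  -- key value comparison through r
  have hrval : ∀ i i' : Fin π.1, r i ≠ r i' → (π.2 i < π.2 i' ↔ π.2 (r i) < π.2 (r i')) := by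
    intro i i' hrr
    by_cases h : a ≤ i ∧ i ≤ b <;> by_cases h' : a ≤ i' ∧ i' ≤ b
    · exact absurd (by rw [hrint i h, hrint i' h']) hrr
    · rw [hrint i h, hrout i' h']
      have w1 := hin i h
      have w2 := hin a ⟨le_refl a, hab⟩
      have w3 := hout i' h'
      rw [Fin.lt_def, Fin.lt_def]
      omega
    · rw [hrout i h, hrint i' h']
      have w1 := hin i' h'
      have w2 := hin a ⟨le_refl a, hab⟩
      have w3 := hout i h
      rw [Fin.lt_def, Fin.lt_def]
      omega
    · rw [hrout i h, hrout i' h']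
  -- the components
  obtain ⟨Icc_pat, hIcc_card, hIcc_pat⟩ := exists_pattern π (Finset.Icc a b)
  set δ : Fin ρ.1 → Perm' := fun t => if g t = a then Icc_pat else one1 with hδ
  refine ⟨ρ, δ, ?_, ?_, ?_, ?_⟩
  · -- 2 ≤ ρ.1
    rw [hρcard, hScard]
    omega
  · rw [hρcard, hScard]
    omega
  · intro t
    by_cases h : g t = a
    · simp only [hδ, if_pos h]
      rw [hIcc_card, Fin.card_Icc]
      omega
    · simp only [hδ, if_neg h]
      exact le_refl 1
  · refine ⟨κ, ?_, ?_, ?_⟩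
    · intro i i' hii'
      exact hg1.le_iff_le.mp (by rw [hκ, hκ]; exact hrmono i i' hii')
    · intro i i' hκne
      have hrr : r i ≠ r i' := by
        intro hc
        exact hκne (hg1.injective (by rw [hκ, hκ, hc]))
      rw [hrval i i' hrr, hg4 (κ i) (κ i'), hκ, hκ]
    · intro t
      by_cases ht : g t = a
      · -- fiber is the interval [a, b]
        have hfib : {i | κ i = t} = ↑(Finset.Icc a b) := by
          ext i
          simp only [Set.mem_setOf_eq, Finset.coe_Icc, Set.mem_Icc]
          constructor
          · intro hκi
            have : r i = a := by rw [← hκ i, hκi, ht]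
            by_contra hc
            rw [hrout i (by tauto)] at this
            -- i = a contradicts ¬(a ≤ i ∧ i ≤ b)
            rw [this] at hc
            exact hc ⟨le_refl a, hab⟩
          · intro hi
            have : r i = a := hrint i hi
            apply hg1.injective
            rw [hκ, this, ht]
        simp only [hδ, if_pos ht]
        rw [hfib]
        exact hIcc_pat
      · -- fiber is the singleton {g t}
        have hgtnotin : ¬(a ≤ g t ∧ g t ≤ b) := by
          intro ⟨hc1, hc2⟩
          have hmem := (hmemS (g t)).mp (Finset.mem_coe.mp (hg2 t))
          exact hmem ⟨lt_of_le_of_ne hc1 (fun hc => ht hc.symm), hc2⟩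
        have hfib : {i | κ i = t} = {g t} := by
          ext i
          simp only [Set.mem_setOf_eq, Set.mem_singleton_iff]
          constructor
          · intro hκi
            have hri : r i = g t := by rw [← hκ i, hκi]
            by_cases h : a ≤ i ∧ i ≤ b
            · rw [hrint i h] at hri
              exact absurd hri.symm ht
            · rw [hrout i h] at hri
              exact hri
          · intro hi
            subst hi
            apply hg1.injective
            rw [hκ, hrout _ hgtnotin]
        simp only [hδ, if_neg ht]
        rw [hfib]
        exact singleton_pattern π (g t)

theorem self_inflation (π : Perm') : IsInflation π π (fun _ => one1) := by
  refine ⟨id, fun i i' h => h, fun i i' _ => Iff.rfl, ?_⟩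
  intro t
  have : {i : Fin π.1 | id i = t} = {t} := by ext i; simp [eq_comm]
  rw [this]
  exact singleton_pattern π t

theorem decomp_aux : ∀ (n : ℕ) (π : Perm'), π.1 ≤ n → 2 ≤ π.1 →
    ∃ (σ : Perm') (α : Fin σ.1 → Perm'), IsSimple σ ∧ 2 ≤ σ.1 ∧ σ.Le π ∧
      (∀ t, 1 ≤ (α t).1 ∧ (α t).1 < π.1) ∧ IsInflation π σ α := by
  intro n
  induction n with
  | zero => intro π hn h2; omega
  | succ n ih =>
    intro π hn h2
    by_cases hs : IsSimple π
    · refine ⟨π, fun _ => one1, hs, h2, Le_refl π, ?_, self_inflation π⟩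
      intro t
      exact ⟨le_refl 1, lt_of_lt_of_le one_lt_two h2⟩
    · obtain ⟨ρ, δ, hρ2, hρlt, hδ1, hπρ⟩ := contract π h2 hs
      obtain ⟨σ, β, hσs, hσ2, hσρ, hβ, hρσ⟩ := ih ρ (by omega) hρ2
      obtain ⟨γ, hγ, hγ2⟩ := compose hπρ hρσ hδ1 (fun s => (hβ s).1) hσ2 (by omega)
      exact ⟨σ, γ, hσs, hσ2, Le_trans hσρ (skeleton_le hπρ hδ1), hγ2, hγ⟩

theorem decomp (π : Perm') (h2 : 2 ≤ π.1) :
    ∃ (σ : Perm') (α : Fin σ.1 → Perm'), IsSimple σ ∧ 2 ≤ σ.1 ∧ σ.Le π ∧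
      (∀ t, 1 ≤ (α t).1 ∧ (α t).1 < π.1) ∧ IsInflation π σ α :=
  decomp_aux π.1 π (le_refl _) h2

def Bad (C : Set Perm') (f : ℕ → Perm') : Prop :=
  (∀ n, f n ∈ C) ∧ ∀ i j : ℕ, i < j → ¬ (f i).Le (f j)

def MBprop (C : Set Perm') (n : ℕ) (g : Fin n → Perm') : Prop :=
  (∃ f, Bad C f ∧ ∀ i : Fin n, f ↑i = g i) ∧
  ∀ j : Fin n, ∀ f, Bad C f → (∀ i : Fin n, (i : ℕ) < (j : ℕ) → f ↑i = g i) →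
    (g j).1 ≤ (f ↑j).1

def Lset (C : Set Perm') (n : ℕ) (g : Fin n → Perm') : Set ℕ :=
  {m | ∃ f, Bad C f ∧ (∀ i : Fin n, f ↑i = g i) ∧ (f n).1 = m}

theorem Lset_nonempty {C n g} (h : MBprop C n g) : (Lset C n g).Nonempty := by
  obtain ⟨f, hf, hagree⟩ := h.1
  exact ⟨(f n).1, f, hf, hagree, rfl⟩

noncomputable def wit {C n g} (h : MBprop C n g) : ℕ → Perm' :=
  (Nat.sInf_mem (Lset_nonempty h)).choose

theorem wit_spec {C n g} (h : MBprop C n g) :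
    Bad C (wit h) ∧ (∀ i : Fin n, wit h ↑i = g i) ∧ ((wit h) n).1 = sInf (Lset C n g) :=
  (Nat.sInf_mem (Lset_nonempty h)).choose_spec

noncomputable def mbstep (C : Set Perm') (n : ℕ) (p : {g : Fin n → Perm' // MBprop C n g}) :
    {g : Fin (n+1) → Perm' // MBprop C (n+1) g} := by
  refine ⟨Fin.snoc p.1 (wit p.2 n), ?_, ?_⟩
  · refine ⟨wit p.2, (wit_spec p.2).1, ?_⟩
    intro i
    induction i using Fin.lastCases with
    | last =>
      rw [Fin.snoc_last]
      simp [Fin.val_last]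
    | cast j =>
      rw [Fin.snoc_castSucc]
      have := (wit_spec p.2).2.1 j
      simpa using this
  · intro j f hf hagree
    induction j using Fin.lastCases with
    | last =>
      rw [Fin.snoc_last]
      have hfL : (f n).1 ∈ Lset C n p.1 := by
        refine ⟨f, hf, ?_, rfl⟩
        intro i
        have := hagree i.castSucc (by simpa using i.2)
        rwa [Fin.snoc_castSucc] at this
      have := (wit_spec p.2).2.2
      rw [Fin.val_last]
      rw [this]
      exact Nat.sInf_le hfL
    | cast j =>
      rw [Fin.snoc_castSucc]
      have := p.2.2 j f hf ?_
      · simpa using this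
      · intro i hi
        have := hagree i.castSucc (by simpa using hi)
        rwa [Fin.snoc_castSucc] at this

noncomputable def mbpre (C : Set Perm') (hne : ∃ f, Bad C f) :
    (n : ℕ) → {g : Fin n → Perm' // MBprop C n g}
  | 0 => ⟨Fin.elim0, ⟨hne.choose, hne.choose_spec, fun i => i.elim0⟩, fun j => j.elim0⟩
  | (n+1) => mbstep C n (mbpre C hne n)

noncomputable def mbs (C : Set Perm') (hne : ∃ f, Bad C f) : ℕ → Perm' :=
  fun n => (mbpre C hne (n+1)).1 (Fin.last n)

theorem mbpre_succ (C : Set Perm') (hne : ∃ f, Bad C f) (n : ℕ) (j : Fin n) :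
    (mbpre C hne (n+1)).1 j.castSucc = (mbpre C hne n).1 j := by
  show (Fin.snoc (α := fun _ => Perm') (mbpre C hne n).1 (wit (mbpre C hne n).2 n)) j.castSucc = _
  rw [Fin.snoc_castSucc]

theorem mbpre_coh (C : Set Perm') (hne : ∃ f, Bad C f) :
    ∀ (n : ℕ) (i : Fin n), (mbpre C hne n).1 i = mbs C hne i := by
  intro n
  induction n with
  | zero => exact fun i => i.elim0
  | succ n ih =>
    intro i
    induction i using Fin.lastCases with
    | last => rfl
    | cast j =>
      rw [mbpre_succ]
      have := ih j
      simpa using this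

theorem mbs_bad (C : Set Perm') (hne : ∃ f, Bad C f) : Bad C (mbs C hne) := by
  constructor
  · intro n
    obtain ⟨f, hf, hagree⟩ := (mbpre C hne (n+1)).2.1
    have := hagree (Fin.last n)
    rw [mbpre_coh] at this
    simp only [Fin.val_last] at this
    rw [← this]
    exact hf.1 n
  · intro i j hij
    obtain ⟨f, hf, hagree⟩ := (mbpre C hne (j+1)).2.1
    have hi := hagree ⟨i, by omega⟩
    have hj := hagree (Fin.last j)
    rw [mbpre_coh] at hi hj
    simp only [Fin.val_last] at hj
    have hi' : f i = mbs C hne i := hi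
    rw [← hi', ← hj]
    exact hf.2 i j hij

theorem mbs_min (C : Set Perm') (hne : ∃ f, Bad C f) (n : ℕ) (f : ℕ → Perm')
    (hf : Bad C f) (hagree : ∀ i, i < n → f i = mbs C hne i) :
    (mbs C hne n).1 ≤ (f n).1 := by
  have := (mbpre C hne (n+1)).2.2 (Fin.last n) f hf ?_
  · rw [mbpre_coh] at this
    simpa [Fin.val_last] using this
  · intro i hi
    simp only [Fin.val_last] at hi
    rw [mbpre_coh]
    exact hagree i hi

theorem bad_len {C : Set Perm'} {f : ℕ → Perm'} (hf : Bad C f) (n : ℕ) : 2 ≤ (f n).1 := by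
  have pos : ∀ m, 1 ≤ (f m).1 := by
    intro m
    by_contra hc
    push_neg at hc
    exact hf.2 m (m+1) (by omega) (le_of_length_zero (by omega))
  by_contra hc
  push_neg at hc
  have h1 : (f n).1 = 1 := by have := pos n; omega
  exact hf.2 n (n+1) (by omega) (le_of_length_one h1 (pos (n+1)))

theorem good_tuples {D : Set Perm'} (hD : D.PartiallyWellOrderedOn Perm'.Le) :
    ∀ (k : ℕ) (F : ℕ → Fin k → Perm'), (∀ j t, F j t ∈ D) →
      ∃ i j, i < j ∧ ∀ t, (F i t).Le (F j t) := by
  intro k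
  induction k with
  | zero => exact fun F _ => ⟨0, 1, by omega, fun t => t.elim0⟩
  | succ k ih =>
    intro F hF
    obtain ⟨g, hg⟩ := hD.exists_monotone_subseq (f := fun j => F j 0) (fun j => hF j 0)
    obtain ⟨i, j, hij, hle⟩ := ih (fun j t => F (g j) t.succ) (fun j t => hF (g j) t.succ)
    refine ⟨g i, g j, g.strictMono hij, ?_⟩
    intro t
    induction t using Fin.cases with
    | zero => exact hg i j hij.le
    | succ t' => exact hle t'

theorem inflation_congr {π σ σ' : Perm'} (hσ : σ' = σ) {α' : Fin σ'.1 → Perm'}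
    (h : IsInflation π σ' α') :
    IsInflation π σ (fun t => α' (Fin.cast (congrArg Sigma.fst hσ).symm t)) := by
  subst hσ
  have : (fun t => α' (Fin.cast (congrArg Sigma.fst (rfl : σ' = σ')).symm t)) = α' := by
    funext t
    exact congrArg α' (Fin.ext rfl)
  rw [this]
  exact h

theorem pwo_main (C : Set Perm') (hC : IsPermClass C)
    (h : {π ∈ C | IsSimple π}.Finite) : IsPwo C := by
  rintro ⟨g0, hg0C, hg0⟩
  have hne : ∃ f, Bad C f := ⟨g0, hg0C, fun i j hij => hg0 i j (Nat.ne_of_lt hij)⟩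
  set hh := mbs C hne with hhdef
  have hbad : Bad C hh := mbs_bad C hne
  have hlen : ∀ n, 2 ≤ (hh n).1 := bad_len hbad
  -- decompose each term
  have hdec : ∀ n, ∃ (σ : Perm') (α : Fin σ.1 → Perm'), IsSimple σ ∧ 2 ≤ σ.1 ∧ σ.Le (hh n) ∧
      (∀ t, 1 ≤ (α t).1 ∧ (α t).1 < (hh n).1) ∧ IsInflation (hh n) σ α :=
    fun n => decomp (hh n) (hlen n)
  choose σf αf hσs hσ2 hσle hα hinf using hdec
  -- the set of all components is good
  set D : Set Perm' := ⋃ n, Set.range (αf n) with hD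
  have hDgood : D.PartiallyWellOrderedOn Perm'.Le := by
    intro F'
    set F : ℕ → Perm' := fun k => (F' k).1 with hFdef
    have hF : ∀ k, F k ∈ D := fun k => (F' k).2
    by_contra hc
    push_neg at hc
    have hFbad : ∀ i j, i < j → ¬ (F i).Le (F j) := fun i j hij hle => hc i j hij hle
    have hFn : ∀ k, ∃ n t, F k = αf n t := by
      intro k
      have := hF k
      rw [hD] at this
      obtain ⟨_, ⟨n, rfl⟩, t, ht⟩ := this
      exact ⟨n, t, ht.symm⟩
    choose nk tk hnk using hFn
    have hnem : (Set.range nk).Nonempty := ⟨nk 0, 0, rfl⟩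
    obtain ⟨k₀, hk₀⟩ := Nat.sInf_mem hnem
    set m := sInf (Set.range nk) with hm
    have hall : ∀ k, m ≤ nk k := fun k => Nat.sInf_le ⟨k, rfl⟩
    -- F k ∈ C and F k ≤ hh (nk k)
    have hFle : ∀ k, (F k).Le (hh (nk k)) := fun k => (hnk k) ▸ component_le (hinf (nk k)) (tk k)
    have hFC : ∀ k, F k ∈ C := fun k => hC _ (hbad.1 (nk k)) _ (hFle k)
    -- the pasted sequence
    set G : ℕ → Perm' := fun j => if j < m then hh j else F (k₀ + (j - m)) with hG
    have hGbad : Bad C G := by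
      constructor
      · intro j
        by_cases hjm : j < m
        · simp only [hG, if_pos hjm]
          exact hbad.1 j
        · simp only [hG, if_neg hjm]
          exact hFC _
      · intro i j hij
        rcases lt_or_ge i m with him | him <;> rcases lt_or_ge j m with hjm | hjm
        · simp only [hG, if_pos him, if_pos hjm]
          exact hbad.2 i j hij
        · simp only [hG, if_pos him, if_neg (by omega : ¬ j < m)]
          intro hle
          have h2 := hFle (k₀ + (j - m))
          have h3 := Le_trans hle h2
          exact hbad.2 i (nk (k₀ + (j - m))) (lt_of_lt_of_le him (hall _)) h3
        · omega
        · simp only [hG, if_neg (by omega : ¬ i < m), if_neg (by omega : ¬ j < m)]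
          exact hFbad _ _ (by omega)
    have hGagree : ∀ i, i < m → G i = hh i := by
      intro i hi
      simp only [hG, if_pos hi]
    have hGm : G m = F k₀ := by
      simp only [hG, if_neg (lt_irrefl m)]
      congr 1
      omega
    have hmin := mbs_min C hne m G hGbad hGagree
    rw [← hhdef, hGm] at hmin
    have h5 : (F k₀).1 < (hh (nk k₀)).1 := by rw [hnk k₀]; exact (hα _ _).2
    rw [hk₀] at h5
    omega
  -- pigeonhole on the finitely many simple permutations
  have hσmem : ∀ n, σf n ∈ {π ∈ C | IsSimple π} :=
    fun n => ⟨hC _ (hbad.1 n) _ (hσle n), hσs n⟩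
  have : Finite ↥{π ∈ C | IsSimple π} := h.to_subtype
  obtain ⟨b, hb⟩ := Finite.exists_infinite_fiber (fun n : ℕ => (⟨σf n, hσmem n⟩ : ↥{π ∈ C | IsSimple π}))
  have hPinf : {k | σf k = (b : Perm')}.Infinite := by
    have heq : (fun n : ℕ => (⟨σf n, hσmem n⟩ : ↥{π ∈ C | IsSimple π})) ⁻¹' {b} =
        {k | σf k = (b : Perm')} := by
      ext k
      simp [Subtype.ext_iff]
    rw [← heq]
    exact Set.infinite_coe_iff.mp hb
  set p : ℕ → Prop := fun k => σf k = (b : Perm') with hp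
  set e : ℕ → ℕ := Nat.nth p with he
  have hemono : StrictMono e := Nat.nth_strictMono hPinf
  have hemem : ∀ k, σf (e k) = (b : Perm') := fun k => Nat.nth_mem_of_infinite hPinf k
  -- tuples of components along the subsequence
  set F : ℕ → Fin (b : Perm').1 → Perm' :=
    fun j t => αf (e j) (Fin.cast (congrArg Sigma.fst (hemem j)).symm t) with hF
  have hFD : ∀ j t, F j t ∈ D := by
    intro j t
    rw [hD]
    exact Set.mem_iUnion.mpr ⟨e j, Set.mem_range_self _⟩
  obtain ⟨i, j, hij, hle⟩ := good_tuples hDgood _ F hFD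
  have hinfi : IsInflation (hh (e i)) (b : Perm') (F i) := inflation_congr (hemem i) (hinf (e i))
  have hinfj : IsInflation (hh (e j)) (b : Perm') (F j) := inflation_congr (hemem j) (hinf (e j))
  exact hbad.2 (e i) (e j) (hemono hij) (inflation_mono hinfi hinfj hle)


/-- **Theorem (Albert–Atkinson).**  Every permutation class containing only
finitely many simple permutations is partially well-ordered. -/
theorem pwo_of_finitely_many_simples (C : Set Perm') (hC : IsPermClass C)
    (h : {π ∈ C | IsSimple π}.Finite) : IsPwo C :=
  pwo_main C hC h
end
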